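/- arXiv:2202.00639 — 8 statements merged into one kernel-verified Lean document; each statement's English description precedes it below -/
import Mathlib

section
/- For all integers n, m with 1 < n ≤ m, there exists an n × m matrix with nonnegative real entries, all column sums equal to n and all row sums equal to m, whose number of nonzero entries equals n + m - gcd(n, m). -/
open Finset

def DS (n m : ℕ) (A : Matrix (Fin n) (Fin m) ℝ) : Prop :=
  (∀ i j, 0 ≤ A i j) ∧ (∀ j, ∑ i, A i j = (n : ℝ)) ∧ (∀ i, ∑ j, A i j = (m : ℝ))

noncomputable def supp {n m : ℕ} (A : Matrix (Fin n) (Fin m) ℝ) : Finset (Fin n × Fin m) :=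
  Finset.univ.filter fun p => A p.1 p.2 ≠ 0

noncomputable def S (n m : ℕ) : ℕ :=
  sInf {k | ∃ A : Matrix (Fin n) (Fin m) ℝ, DS n m A ∧ (supp A).card = k}

def IsExtremal {n m : ℕ} (M : Matrix (Fin n) (Fin m) ℝ) : Prop :=
  DS n m M ∧ ∀ (A B : Matrix (Fin n) (Fin m) ℝ) (t : ℝ), DS n m A → DS n m B →
    0 < t → t < 1 → M = t • A + (1 - t) • B → A = M ∧ B = M

lemma supp_transpose {n m : ℕ} (A : Matrix (Fin n) (Fin m) ℝ) :
    (supp A.transpose).card = (supp A).card := by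
  unfold supp
  rw [Finset.card_filter, Finset.card_filter]
  rw [← Equiv.sum_comp (Equiv.prodComm (Fin n) (Fin m))
    (fun p : Fin m × Fin n => if A.transpose p.1 p.2 ≠ 0 then 1 else 0)]
  simp [Matrix.transpose_apply]
  refine Finset.sum_congr rfl (fun x _ => ?_)
  exact ite_not _ _ _

lemma DS_transpose {n m : ℕ} (A : Matrix (Fin n) (Fin m) ℝ) (h : DS n m A) :
    DS m n A.transpose := by
  obtain ⟨h0, hc, hr⟩ := h
  exact ⟨fun i j => h0 j i, fun j => hr j, fun i => hc i⟩

lemma aux : ∀ N n m : ℕ, n + m ≤ N → 0 < n → n ≤ m →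
    ∃ A : Matrix (Fin n) (Fin m) ℝ, DS n m A ∧ (supp A).card = n + m - Nat.gcd n m := by
  intro N
  induction N with
  | zero => intro n m h hn hnm; omega
  | succ N ih =>
    intro n m hN hn hnm
    rcases eq_or_lt_of_le hnm with heq | hlt
    · -- n = m : diagonal matrix n • I
      subst heq
      refine ⟨fun i j => if i = j then (n : ℝ) else 0, ⟨?_, ?_, ?_⟩, ?_⟩
      · intro i j; dsimp only; positivity
      · intro j; simp
      · intro i; simp
      · unfold supp
        rw [Finset.card_filter, Fintype.sum_prod_type]
        have hn0 : (n : ℝ) ≠ 0 := by positivity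
        have : ∀ i : Fin n, (∑ j : Fin n,
            if (if i = j then (n:ℝ) else 0) ≠ 0 then 1 else 0) = 1 := by
          intro i
          rw [Finset.sum_eq_single i]
          · simp [hn0]
          · intro b _ hb; simp [Ne.symm hb]
          · simp
        simp only [ne_eq] at this
        rw [Finset.sum_congr rfl (fun i _ => this i)]
        simp [Nat.gcd_self]
    · -- n < m : recurse on (n, m - n)
      set m' := m - n with hm'
      have hm'pos : 0 < m' := by omega
      have hB : ∃ B : Matrix (Fin n) (Fin m') ℝ, DS n m' B ∧
          (supp B).card = n + m' - Nat.gcd n m' := by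
        rcases le_or_gt n m' with h1 | h1
        · exact ih n m' (by omega) hn h1
        · obtain ⟨B', hB', hcard⟩ := ih m' n (by omega) hm'pos h1.le
          exact ⟨B'.transpose, DS_transpose B' hB', by
            rw [supp_transpose, hcard, Nat.gcd_comm, Nat.add_comm]⟩
      obtain ⟨B, ⟨hB0, hBc, hBr⟩, hBcard⟩ := hB
      have hmn : m' + n = m := by omega
      let e : Fin m' ⊕ Fin n ≃ Fin m := finSumFinEquiv.trans (finCongr hmn)
      let A : Matrix (Fin n) (Fin m) ℝ := fun i j =>
        Sum.elim (fun j' => B i j') (fun j' => if j' = i then (n : ℝ) else 0) (e.symm j)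
      have hA : ∀ i s, A i (e s) =
          Sum.elim (fun j' => B i j') (fun j' => if j' = i then (n : ℝ) else 0) s := by
        intro i s; simp [A]
      have hg : Nat.gcd n m' = Nat.gcd n m := by
        rw [hm']; exact Nat.gcd_sub_self_right hnm
      have hgle : Nat.gcd n m' ≤ m' := Nat.le_of_dvd hm'pos (Nat.gcd_dvd_right n m')
      refine ⟨A, ⟨?_, ?_, ?_⟩, ?_⟩
      · intro i j
        simp only [A]
        rcases e.symm j with j' | j'
        · exact hB0 i j'
        · dsimp only [Sum.elim_inr]; positivity
      · intro j
        obtain ⟨s, rfl⟩ : ∃ s, j = e s := ⟨e.symm j, (e.apply_symm_apply j).symm⟩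
        simp only [hA]
        rcases s with j' | j'
        · simpa using hBc j'
        · simp only [Sum.elim_inr]
          rw [Finset.sum_eq_single j']
          · simp
          · intro b _ hb; simp [Ne.symm hb]
          · simp
      · intro i
        rw [← Equiv.sum_comp e (fun j => A i j)]
        simp only [hA]
        rw [Fintype.sum_sum_type]
        simp only [Sum.elim_inl, Sum.elim_inr]
        rw [hBr i, Finset.sum_eq_single i (by intro b _ hb; simp [hb]) (by simp)]
        simp only [if_pos rfl]
        have : ((m' : ℝ)) + n = m := by
          have := hmn; push_cast [← this]; ring
        exact this
      · unfold supp
        rw [Finset.card_filter, Fintype.sum_prod_type]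
        have hn0 : (n : ℝ) ≠ 0 := by positivity
        have key : ∀ i : Fin n, (∑ j : Fin m, if A i j ≠ 0 then 1 else 0) =
            (∑ j' : Fin m', if B i j' ≠ 0 then 1 else 0) + 1 := by
          intro i
          rw [← Equiv.sum_comp e (fun j => if A i j ≠ 0 then 1 else 0)]
          simp only [hA]
          rw [Fintype.sum_sum_type]
          congr 1
          simp only [Sum.elim_inr]
          rw [Finset.sum_eq_single i]
          · simp [hn0]
          · intro b _ hb; simp [hb]
          · simp
        rw [Finset.sum_congr rfl (fun i _ => key i), Finset.sum_add_distrib]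
        have : ∑ i : Fin n, ∑ j' : Fin m', (if B i j' ≠ 0 then 1 else 0) = (supp B).card := by
          unfold supp
          rw [Finset.card_filter, Fintype.sum_prod_type]
        rw [this, hBcard]
        simp only [Finset.sum_const, Finset.card_univ, Fintype.card_fin, smul_eq_mul, mul_one]
        omega

theorem stmt0 (n m : ℕ) (hn : 1 < n) (hnm : n ≤ m) :
    ∃ A : Matrix (Fin n) (Fin m) ℝ, DS n m A ∧ (supp A).card = n + m - Nat.gcd n m := by
  exact aux (n + m) n m le_rfl (by omega) hnm
end

section
/- For all integers n, m with 1 < n ≤ m, every n × m matrix with nonnegative real entries, all column sums equal to n and all row sums equal to m, has at least n + m - gcd(n, m) nonzero entries. -/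
open Finset SimpleGraph

section Forest
variable {V : Type*} [Fintype V] [DecidableEq V]

lemma reach_aux {G : SimpleGraph V} {u v x y : V} (p : G.Walk x y) :
    (G.deleteEdges {s(u,v)}).Reachable x y ∨ (G.deleteEdges {s(u,v)}).Reachable x u ∨
      (G.deleteEdges {s(u,v)}).Reachable x v := by
  induction p with
  | nil => exact Or.inl (Reachable.refl _)
  | @cons a b c h p ih =>
    by_cases he : s(a, b) = s(u, v)
    · rw [Sym2.eq_iff] at he
      rcases he with ⟨rfl, rfl⟩ | ⟨rfl, rfl⟩
      · exact Or.inr (Or.inl (Reachable.refl _))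
      · exact Or.inr (Or.inr (Reachable.refl _))
    · have hadj : (G.deleteEdges {s(u,v)}).Adj a b := by
        rw [deleteEdges_adj]; exact ⟨h, by simpa using he⟩
      rcases ih with h1 | h1 | h1
      · exact Or.inl (hadj.reachable.trans h1)
      · exact Or.inr (Or.inl (hadj.reachable.trans h1))
      · exact Or.inr (Or.inr (hadj.reachable.trans h1))

lemma cc_delete_le {G : SimpleGraph V} (u v : V) :
    Nat.card (G.deleteEdges {s(u,v)}).ConnectedComponent ≤
      Nat.card G.ConnectedComponent + 1 := by
  classical
  set G' := G.deleteEdges {s(u,v)} with hG'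
  have hle : G' ≤ G := deleteEdges_le _
  let f : G'.ConnectedComponent → G.ConnectedComponent ⊕ Unit := fun C =>
    if C = G'.connectedComponentMk v then Sum.inr ()
    else Sum.inl (C.map (SimpleGraph.Hom.ofLE hle))
  have hinj : Function.Injective f := by
    intro C D hCD
    by_cases hC : C = G'.connectedComponentMk v
    · by_cases hD : D = G'.connectedComponentMk v
      · exact hC.trans hD.symm
      · simp [f, hC, hD] at hCD
    · by_cases hD : D = G'.connectedComponentMk v
      · simp [f, hC, hD] at hCD
      · simp only [f, if_neg hC, if_neg hD] at hCD
        obtain ⟨x, rfl⟩ := C.exists_rep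
        obtain ⟨y, rfl⟩ := D.exists_rep
        simp only [ConnectedComponent.map_mk, Sum.inl.injEq] at hCD
        have hr : G.Reachable x y := ConnectedComponent.eq.mp hCD
        obtain ⟨p⟩ := hr
        have hx : ¬ G'.Reachable x v := fun h => hC (ConnectedComponent.sound h)
        have hy : ¬ G'.Reachable y v := fun h => hD (ConnectedComponent.sound h)
        rcases reach_aux (u := u) (v := v) p with h1 | h1 | h1
        · exact ConnectedComponent.sound h1
        · rcases reach_aux (u := u) (v := v) p.reverse with h2 | h2 | h2
          · exact ConnectedComponent.sound h2.symm
          · exact ConnectedComponent.sound (h1.trans h2.symm)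
          · exact absurd h2 hy
        · exact absurd h1 hx
  calc Nat.card G'.ConnectedComponent
      ≤ Nat.card (G.ConnectedComponent ⊕ Unit) := Nat.card_le_card_of_injective f hinj
    _ = Nat.card G.ConnectedComponent + 1 := by simp

lemma forest_bound (k : ℕ) : ∀ (G : SimpleGraph V), Nat.card G.edgeSet = k →
    Fintype.card V ≤ Nat.card G.edgeSet + Nat.card G.ConnectedComponent := by
  induction k using Nat.strong_induction_on with
  | _ k ih =>
    intro G hk
    classical
    rcases Set.eq_empty_or_nonempty G.edgeSet with he | he
    · have hG : G = ⊥ := edgeSet_eq_empty.mp he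
      subst hG
      have hinj : Function.Injective ((⊥ : SimpleGraph V).connectedComponentMk) := by
        intro a b hab
        exact reachable_bot.mp (ConnectedComponent.eq.mp hab)
      have h2 := Nat.card_le_card_of_injective _ hinj
      calc Fintype.card V = Nat.card V := (Nat.card_eq_fintype_card (α := V)).symm
        _ ≤ Nat.card (⊥ : SimpleGraph V).ConnectedComponent := h2
        _ ≤ _ := Nat.le_add_left _ _
    · obtain ⟨e, hemem⟩ := he
      induction e using Sym2.ind with
      | _ u v =>
        have hadj : G.Adj u v := hemem
        set G' := G.deleteEdges {s(u,v)} with hG'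
        have hset : G'.edgeSet = G.edgeSet \ {s(u,v)} := edgeSet_deleteEdges _
        have hcard : Nat.card G'.edgeSet = k - 1 := by
          rw [Nat.card_coe_set_eq, hset,
            Set.ncard_diff_singleton_of_mem hemem, ← Nat.card_coe_set_eq, hk]
        have hkpos : 0 < k := by
          rw [← hk, Nat.card_coe_set_eq]
          exact (Set.ncard_pos (G.edgeSet.toFinite)).mpr ⟨_, hemem⟩
        have h1 := ih (k - 1) (by omega) G' hcard
        have h2 := cc_delete_le (G := G) u v
        rw [← hG'] at h2
        rw [hcard] at h1
        rw [hk]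
        omega

end Forest


theorem stmt1 (n m : ℕ) (hn : 1 < n) (hnm : n ≤ m)
    (A : Matrix (Fin n) (Fin m) ℝ) (hA : DS n m A) :
    n + m - Nat.gcd n m ≤ (supp A).card := by
  classical
  obtain ⟨hpos, hcol, hrow⟩ := hA
  set g := Nat.gcd n m with hg
  have hn0 : 0 < n := by omega
  have hm0 : 0 < m := by omega
  have hg0 : 0 < g := Nat.gcd_pos_of_pos_left m hn0
  let G : SimpleGraph (Fin n ⊕ Fin m) :=
    { Adj := fun x y =>
        match x, y with
        | .inl i, .inr j => A i j ≠ 0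
        | .inr j, .inl i => A i j ≠ 0
        | _, _ => False
      symm := ⟨by rintro (i | i) (j | j) h <;> simp_all⟩
      loopless := ⟨by rintro (i | i) h <;> simp_all⟩ }
  have hAdj : ∀ i j, G.Adj (Sum.inl i) (Sum.inr j) ↔ A i j ≠ 0 := fun i j => Iff.rfl
  -- edge count
  have hedge : Nat.card G.edgeSet = (supp A).card := by
    rw [← Nat.card_eq_finsetCard]
    refine (Nat.card_congr (Equiv.ofBijective
      (fun p : {p // p ∈ supp A} =>
        (⟨s(Sum.inl p.1.1, Sum.inr p.1.2), by
          rw [mem_edgeSet, hAdj]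
          have hp := p.2
          simp only [supp, Finset.mem_filter] at hp
          exact hp.2⟩ : G.edgeSet)) ⟨?_, ?_⟩)).symm
    · rintro ⟨⟨i, j⟩, hij⟩ ⟨⟨i', j'⟩, hij'⟩ h
      simp only [Subtype.mk.injEq, Sym2.eq_iff] at h
      rcases h with ⟨h1, h2⟩ | ⟨h1, h2⟩
      · simp only [Sum.inl.injEq, Sum.inr.injEq] at h1 h2
        simp [h1, h2]
      · simp at h1
    · rintro ⟨e, he⟩
      induction e using Sym2.ind with
      | _ x y =>
        rw [mem_edgeSet] at he
        rcases x with i | j <;> rcases y with i' | j'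
        · exact absurd he (by simp [G])
        · exact ⟨⟨(i, j'), by simpa [supp] using he⟩, rfl⟩
        · refine ⟨⟨(i', j), by simpa [supp] using he⟩, ?_⟩
          simp only [Subtype.mk.injEq]
          exact (Sym2.eq_swap)
        · exact absurd he (by simp [G])
  -- components
  letI : Fintype G.ConnectedComponent := Fintype.ofFinite _
  have hmk : ∀ i j, A i j ≠ 0 →
      G.connectedComponentMk (Sum.inl i) = G.connectedComponentMk (Sum.inr j) :=
    fun i j h => ConnectedComponent.sound (SimpleGraph.Adj.reachable ((hAdj i j).mpr h))
  let RS : G.ConnectedComponent → Finset (Fin n) :=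
    fun C => univ.filter (fun i => G.connectedComponentMk (Sum.inl i) = C)
  let CS : G.ConnectedComponent → Finset (Fin m) :=
    fun C => univ.filter (fun j => G.connectedComponentMk (Sum.inr j) = C)
  have hkeyN : ∀ C, (RS C).card * m = (CS C).card * n := by
    intro C
    have h3 : ∀ i ∈ RS C, ∑ j, A i j = ∑ j ∈ CS C, A i j := by
      intro i hi
      refine (Finset.sum_subset (Finset.subset_univ _) ?_).symm
      intro j _ hj
      by_contra hne
      apply hj
      simp only [CS, mem_filter, mem_univ, true_and]
      rw [← hmk i j hne]
      simpa [RS] using hi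
    have h4 : ∀ j ∈ CS C, ∑ i, A i j = ∑ i ∈ RS C, A i j := by
      intro j hj
      refine (Finset.sum_subset (Finset.subset_univ _) ?_).symm
      intro i _ hi
      by_contra hne
      apply hi
      simp only [RS, mem_filter, mem_univ, true_and]
      rw [hmk i j hne]
      simpa [CS] using hj
    have hR : ((RS C).card : ℝ) * m = ∑ i ∈ RS C, ∑ j ∈ CS C, A i j := by
      rw [← Finset.sum_congr rfl h3, Finset.sum_congr rfl (fun i _ => hrow i)]
      simp [mul_comm]
    have hC : ((CS C).card : ℝ) * n = ∑ j ∈ CS C, ∑ i ∈ RS C, A i j := by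
      rw [← Finset.sum_congr rfl h4, Finset.sum_congr rfl (fun j _ => hcol j)]
      simp [mul_comm]
    have : ((RS C).card : ℝ) * m = ((CS C).card : ℝ) * n := by
      rw [hR, hC, Finset.sum_comm]
    exact_mod_cast this
  have hRS1 : ∀ C, 0 < (RS C).card := by
    intro C
    obtain ⟨x, rfl⟩ := C.exists_rep
    apply Finset.card_pos.mpr
    rcases x with i | j
    · exact ⟨i, by simp only [RS, mem_filter, mem_univ, true_and]; rfl⟩
    · have hex : ∃ i, A i j ≠ 0 := by
        by_contra hno
        push_neg at hno
        have h0 : (n : ℝ) = 0 := by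
          rw [← hcol j]
          exact Finset.sum_eq_zero fun i _ => hno i
        exact absurd (Nat.cast_eq_zero.mp h0) (by omega)
      obtain ⟨i, hi⟩ := hex
      refine ⟨i, by simp only [RS, mem_filter, mem_univ, true_and]; rw [hmk i j hi]; rfl⟩
  have hsum : ∑ C : G.ConnectedComponent, (RS C).card = n := by
    have := Finset.card_eq_sum_card_fiberwise
      (f := fun i : Fin n => G.connectedComponentMk (Sum.inl i)) (s := univ) (t := univ)
      (fun x _ => mem_univ _)
    simpa [RS] using this.symm
  obtain ⟨n', hng⟩ : ∃ k, n = k * g := ⟨n / g, (Nat.div_mul_cancel (Nat.gcd_dvd_left n m)).symm⟩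
  obtain ⟨m', hmg⟩ : ∃ k, m = k * g := ⟨m / g, (Nat.div_mul_cancel (Nat.gcd_dvd_right n m)).symm⟩
  have hn'eq : n' = n / g := by rw [hng]; exact (Nat.mul_div_cancel _ hg0).symm
  have hm'eq : m' = m / g := by rw [hmg]; exact (Nat.mul_div_cancel _ hg0).symm
  have hn'0 : 0 < n' := by
    rcases Nat.eq_zero_or_pos n' with h | h
    · rw [h, zero_mul] at hng; omega
    · exact h
  have hco : Nat.Coprime n' m' := by
    rw [hn'eq, hm'eq]; exact Nat.coprime_div_gcd_div_gcd hg0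
  have hlow : ∀ C, n' ≤ (RS C).card := by
    intro C
    have h := hkeyN C
    have h2 : (RS C).card * m' = (CS C).card * n' := by
      apply Nat.eq_of_mul_eq_mul_right hg0
      rw [mul_assoc, mul_assoc, ← hmg, ← hng]
      exact h
    have hdvd : n' ∣ (RS C).card := by
      have : n' ∣ (RS C).card * m' := h2 ▸ Dvd.intro_left _ rfl
      exact (Nat.Coprime.dvd_of_dvd_mul_right hco this)
    exact Nat.le_of_dvd (hRS1 C) hdvd
  have hc : Fintype.card G.ConnectedComponent ≤ g := by
    have h1 : Fintype.card G.ConnectedComponent * n' ≤ n := by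
      calc Fintype.card G.ConnectedComponent * n'
          = ∑ _C : G.ConnectedComponent, n' := by simp [mul_comm]
        _ ≤ ∑ C : G.ConnectedComponent, (RS C).card := Finset.sum_le_sum (fun C _ => hlow C)
        _ = n := hsum
    have h2 : Fintype.card G.ConnectedComponent * n' ≤ g * n' :=
      h1.trans (le_of_eq (by rw [hng, mul_comm]))
    exact Nat.le_of_mul_le_mul_right h2 hn'0
  have hforest := forest_bound (V := Fin n ⊕ Fin m) (Nat.card G.edgeSet) G rfl
  rw [hedge] at hforest
  have hV : Fintype.card (Fin n ⊕ Fin m) = n + m := by simp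
  have hcc : Nat.card G.ConnectedComponent = Fintype.card G.ConnectedComponent :=
    Nat.card_eq_fintype_card
  omega
end

section
/- Let S(n,m) denote the minimum cardinality of the support over all n × m doubly stochastic matrices with uniform marginals. Then for all integers 1 < n ≤ m, S(n,m) = n + m - gcd(n,m). -/
open Finset

open scoped Classical

noncomputable def W (n m : ℕ) : Matrix (Fin n) (Fin m) ℝ :=
  fun i j => ((min (((i:ℕ)+1)*m) (((j:ℕ)+1)*n) - max ((i:ℕ)*m) ((j:ℕ)*n) : ℕ) : ℝ)

lemma stepZ (a b c d : ℕ) (hab : a ≤ b) (hcd : c ≤ d) :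
    ((min b d - max a c : ℕ) : ℤ) = (min (d:ℤ) b - min (d:ℤ) a) - (min (c:ℤ) b - min (c:ℤ) a) := by
  omega

lemma rowsum_nat (n m : ℕ) (i : Fin n) :
    ∑ j : Fin m, (min (((i:ℕ)+1)*m) (((j:ℕ)+1)*n) - max ((i:ℕ)*m) ((j:ℕ)*n) : ℕ) = m := by
  have hab : (i:ℕ)*m ≤ ((i:ℕ)+1)*m := Nat.mul_le_mul_right m (by omega)
  have hZ : ((∑ j : Fin m, (min (((i:ℕ)+1)*m) (((j:ℕ)+1)*n) - max ((i:ℕ)*m) ((j:ℕ)*n) : ℕ) : ℕ) : ℤ) = m := by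
    rw [Nat.cast_sum]
    have hterm : ∀ j : Fin m,
        ((min (((i:ℕ)+1)*m) (((j:ℕ)+1)*n) - max ((i:ℕ)*m) ((j:ℕ)*n) : ℕ) : ℤ)
        = (fun t : ℕ => min ((t*n : ℕ):ℤ) (((i:ℕ)+1)*m) - min ((t*n : ℕ):ℤ) ((i:ℕ)*m)) ((j:ℕ)+1)
          - (fun t : ℕ => min ((t*n : ℕ):ℤ) (((i:ℕ)+1)*m) - min ((t*n : ℕ):ℤ) ((i:ℕ)*m)) (j:ℕ) := by
      intro j
      have := stepZ ((i:ℕ)*m) (((i:ℕ)+1)*m) ((j:ℕ)*n) (((j:ℕ)+1)*n) hab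
        (Nat.mul_le_mul_right n (by omega))
      rw [this]
      push_cast
      ring_nf
    rw [Finset.sum_congr rfl (fun j _ => hterm j)]
    rw [Fin.sum_univ_eq_sum_range (fun j =>
      (fun t : ℕ => min ((t*n : ℕ):ℤ) (((i:ℕ)+1)*m) - min ((t*n : ℕ):ℤ) ((i:ℕ)*m)) (j+1)
      - (fun t : ℕ => min ((t*n : ℕ):ℤ) (((i:ℕ)+1)*m) - min ((t*n : ℕ):ℤ) ((i:ℕ)*m)) j)]
    rw [Finset.sum_range_sub (fun t : ℕ => min ((t*n : ℕ):ℤ) (((i:ℕ)+1)*m) - min ((t*n : ℕ):ℤ) ((i:ℕ)*m)) m]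
    have h1 : ((i:ℕ)+1)*m ≤ m*n := by
      have : (i:ℕ)+1 ≤ n := i.2
      calc ((i:ℕ)+1)*m ≤ n*m := Nat.mul_le_mul_right m this
        _ = m*n := Nat.mul_comm n m
    have h0 : (i:ℕ)*m ≤ m*n := le_trans hab h1
    simp only [Nat.zero_mul, Nat.cast_zero]
    rw [min_eq_right (by exact_mod_cast h1), min_eq_right (by exact_mod_cast h0)]
    have : min (0:ℤ) (((i:ℕ)+1)*m) = 0 := min_eq_left (by positivity)
    rw [this, min_eq_left (by positivity)]
    push_cast; ring
  exact_mod_cast hZ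

lemma colsum_nat (n m : ℕ) (hm : 0 < m) (j : Fin m) :
    ∑ i : Fin n, (min (((i:ℕ)+1)*m) (((j:ℕ)+1)*n) - max ((i:ℕ)*m) ((j:ℕ)*n) : ℕ) = n := by
  refine Eq.trans (Finset.sum_congr rfl fun x _ => ?_) (rowsum_nat m n j)
  rw [min_comm, max_comm]


-- uniqueness of the "interval index"
lemma uniq_idx (m i i' v : ℕ) (h1 : i*m < v) (h2 : v ≤ (i+1)*m)
    (h3 : i'*m < v) (h4 : v ≤ (i'+1)*m) : i = i' := by
  rcases lt_trichotomy i i' with h | h | h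
  · exfalso
    have : (i+1)*m ≤ i'*m := Nat.mul_le_mul_right m h
    omega
  · exact h
  · exfalso
    have : (i'+1)*m ≤ i*m := Nat.mul_le_mul_right m h
    omega

lemma div_facts (m v : ℕ) (hm : 0 < m) (hv : 0 < v) :
    ((v-1)/m)*m < v ∧ v ≤ ((v-1)/m + 1)*m := by
  have h := Nat.div_add_mod (v-1) m
  have h2 := Nat.mod_lt (v-1) hm
  have e1 : ((v-1)/m)*m = m*((v-1)/m) := Nat.mul_comm _ _
  have e2 : ((v-1)/m + 1)*m = m*((v-1)/m) + m := by ring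
  omega

lemma mult_eq (m q v : ℕ) (hm : 0 < m) (hdvd : m ∣ v) (h1 : q*m < v) (h2 : v ≤ (q+1)*m) :
    v = (q+1)*m := by
  obtain ⟨s, rfl⟩ := hdvd
  have hqs : q < s := by
    by_contra hc
    push_neg at hc
    have : m * s ≤ m * q := Nat.mul_le_mul_left m hc
    nlinarith
  have hsq : s ≤ q + 1 := by
    by_contra hc
    push_neg at hc
    have : m * (q+2) ≤ m * s := Nat.mul_le_mul_left m hc
    nlinarith
  have : s = q + 1 := by omega
  subst this; ring

def DD (n m : ℕ) : Finset ℕ :=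
  ((range n).image fun i => (i+1)*m) ∪ ((range m).image fun j => (j+1)*n)

lemma cardDD (n m : ℕ) (hn : 0 < n) (hm : 0 < m) :
    (DD n m).card = n + m - Nat.gcd n m := by
  classical
  have hlcm : 0 < Nat.lcm n m := Nat.pos_of_ne_zero (Nat.lcm_ne_zero hn.ne' hm.ne')
  have hgl : Nat.gcd n m * Nat.lcm n m = n * m := Nat.gcd_mul_lcm n m
  have hinter : ((range n).image fun i => (i+1)*m) ∩ ((range m).image fun j => (j+1)*n)
      = (range (Nat.gcd n m)).image fun k => (k+1)*(Nat.lcm n m) := by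
    ext v
    simp only [mem_inter, mem_image, mem_range]
    constructor
    · rintro ⟨⟨i, hi, rfl⟩, ⟨j, hj, hv⟩⟩
      have hdm : m ∣ (i+1)*m := ⟨i+1, by ring⟩
      have hdn : n ∣ (i+1)*m := ⟨j+1, by rw [← hv]; ring⟩
      have hdl : Nat.lcm n m ∣ (i+1)*m := Nat.lcm_dvd hdn hdm
      obtain ⟨k, hk⟩ := hdl
      have hk1 : 1 ≤ k := by
        rcases Nat.eq_zero_or_pos k with h | h
        · subst h; simp at hk; omega
        · exact h
      have hkg : k ≤ Nat.gcd n m := by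
        by_contra hc
        push_neg at hc
        have h1 : (i+1)*m ≤ n*m := Nat.mul_le_mul_right m hi
        have h2 : Nat.lcm n m * (Nat.gcd n m + 1) ≤ Nat.lcm n m * k := Nat.mul_le_mul_left _ hc
        nlinarith
      refine ⟨k-1, by omega, ?_⟩
      rw [hk, show k-1+1 = k from by omega]
      ring
    · rintro ⟨k, hk, rfl⟩
      have hvn : n ∣ (k+1)*(Nat.lcm n m) := Dvd.dvd.mul_left (Nat.dvd_lcm_left n m) (k+1)
      have hvm : m ∣ (k+1)*(Nat.lcm n m) := Dvd.dvd.mul_left (Nat.dvd_lcm_right n m) (k+1)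
      have hub : (k+1)*(Nat.lcm n m) ≤ n*m := by
        calc (k+1)*(Nat.lcm n m) ≤ Nat.gcd n m * Nat.lcm n m :=
              Nat.mul_le_mul_right _ (by omega)
          _ = n*m := hgl
      have hpos : 0 < (k+1)*(Nat.lcm n m) := by positivity
      obtain ⟨t, ht⟩ := hvm
      obtain ⟨s, hs⟩ := hvn
      refine ⟨⟨t-1, ?_, ?_⟩, ⟨s-1, ?_, ?_⟩⟩
      · have ht1 : 1 ≤ t := by
          rcases Nat.eq_zero_or_pos t with h | h
          · subst h; simp at ht; omega
          · exact h
        have : m * t ≤ n * m := ht ▸ hub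
        by_contra hc
        push_neg at hc
        have : m * (n+1) ≤ m * t := Nat.mul_le_mul_left m (by omega)
        nlinarith
      · have ht1 : 1 ≤ t := by
          rcases Nat.eq_zero_or_pos t with h | h
          · subst h; simp at ht; omega
          · exact h
        rw [ht]; have : t - 1 + 1 = t := by omega
        rw [this]; ring
      · have hs1 : 1 ≤ s := by
          rcases Nat.eq_zero_or_pos s with h | h
          · subst h; simp at hs; omega
          · exact h
        have : n * s ≤ n*m := hs ▸ hub
        by_contra hc
        push_neg at hc
        have : n * (m+1) ≤ n * s := Nat.mul_le_mul_left n (by omega)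
        nlinarith
      · have hs1 : 1 ≤ s := by
          rcases Nat.eq_zero_or_pos s with h | h
          · subst h; simp at hs; omega
          · exact h
        rw [hs]; have : s - 1 + 1 = s := by omega
        rw [this]; ring
  have c1 : ((range n).image fun i => (i+1)*m).card = n := by
    rw [Finset.card_image_of_injective _ (fun a b hab => by
      have := Nat.eq_of_mul_eq_mul_right hm hab; omega)]
    exact card_range n
  have c2 : ((range m).image fun j => (j+1)*n).card = m := by
    rw [Finset.card_image_of_injective _ (fun a b hab => by
      have := Nat.eq_of_mul_eq_mul_right hn hab; omega)]
    exact card_range m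
  have c3 : (((range n).image fun i => (i+1)*m) ∩ ((range m).image fun j => (j+1)*n)).card
      = Nat.gcd n m := by
    rw [hinter, Finset.card_image_of_injective _ (fun a b hab => by
      have := Nat.eq_of_mul_eq_mul_right hlcm hab; omega)]
    exact card_range _
  have := Finset.card_union_add_card_inter ((range n).image fun i => (i+1)*m)
    ((range m).image fun j => (j+1)*n)
  rw [c1, c2, c3] at this
  unfold DD
  have hg : Nat.gcd n m ≤ n := Nat.le_of_dvd hn (Nat.gcd_dvd_left n m)
  omega

lemma card_overlap (n m : ℕ) (hn : 0 < n) (hm : 0 < m) :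
    ((univ : Finset (Fin n × Fin m)).filter fun p =>
      max ((p.1:ℕ)*m) ((p.2:ℕ)*n) < min (((p.1:ℕ)+1)*m) (((p.2:ℕ)+1)*n)).card
      = n + m - Nat.gcd n m := by
  classical
  rw [← cardDD n m hn hm]
  apply Finset.card_bij (fun p _ => min (((p.1:ℕ)+1)*m) (((p.2:ℕ)+1)*n))
  · -- maps into DD
    rintro ⟨i, j⟩ hp
    simp only [mem_filter, mem_univ, true_and] at hp
    unfold DD
    simp only [mem_union, mem_image, mem_range]
    rcases min_choice (((i:ℕ)+1)*m) (((j:ℕ)+1)*n) with h | h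
    · exact Or.inl ⟨i, i.2, h.symm⟩
    · exact Or.inr ⟨j, j.2, h.symm⟩
  · -- injective
    rintro ⟨i, j⟩ hp ⟨i', j'⟩ hp' hv
    simp only [mem_filter, mem_univ, true_and] at hp hp'
    set v := min (((i:ℕ)+1)*m) (((j:ℕ)+1)*n) with hvdef
    have hi1 : (i:ℕ)*m < v := lt_of_le_of_lt (le_max_left _ _) hp
    have hj1 : (j:ℕ)*n < v := lt_of_le_of_lt (le_max_right _ _) hp
    have hi2 : v ≤ ((i:ℕ)+1)*m := min_le_left _ _
    have hj2 : v ≤ ((j:ℕ)+1)*n := min_le_right _ _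
    have hi1' : (i':ℕ)*m < v := by rw [hv]; exact lt_of_le_of_lt (le_max_left _ _) hp'
    have hj1' : (j':ℕ)*n < v := by rw [hv]; exact lt_of_le_of_lt (le_max_right _ _) hp'
    have hi2' : v ≤ ((i':ℕ)+1)*m := by rw [hv]; exact min_le_left _ _
    have hj2' : v ≤ ((j':ℕ)+1)*n := by rw [hv]; exact min_le_right _ _
    have e1 : (i:ℕ) = i' := uniq_idx m _ _ v hi1 hi2 hi1' hi2'
    have e2 : (j:ℕ) = j' := uniq_idx n _ _ v hj1 hj2 hj1' hj2'
    ext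
    · exact e1
    · exact e2
  · -- surjective
    intro v hv
    have hv1 : 1 ≤ v ∧ v ≤ n*m ∧ (m ∣ v ∨ n ∣ v) := by
      unfold DD at hv
      simp only [mem_union, mem_image, mem_range] at hv
      rcases hv with ⟨i, hi, rfl⟩ | ⟨j, hj, rfl⟩
      · exact ⟨Nat.mul_pos (Nat.succ_pos i) hm, Nat.mul_le_mul_right m hi, Or.inl ⟨i+1, by ring⟩⟩
      · refine ⟨Nat.mul_pos (Nat.succ_pos j) hn, ?_, Or.inr ⟨j+1, by ring⟩⟩
        calc (j+1)*n ≤ m*n := Nat.mul_le_mul_right n hj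
          _ = n*m := Nat.mul_comm m n
    obtain ⟨hv1, hv2, hv3⟩ := hv1
    obtain ⟨d1, d2⟩ := div_facts m v hm (by omega)
    obtain ⟨e1, e2⟩ := div_facts n v hn (by omega)
    have hiltn : (v-1)/m < n := by
      by_contra hc
      push_neg at hc
      have : n*m ≤ ((v-1)/m)*m := Nat.mul_le_mul_right m hc
      omega
    have hjltm : (v-1)/n < m := by
      by_contra hc
      push_neg at hc
      have : m*n ≤ ((v-1)/n)*n := Nat.mul_le_mul_right n hc
      have : n*m = m*n := Nat.mul_comm n m
      omega
    refine ⟨(⟨(v-1)/m, hiltn⟩, ⟨(v-1)/n, hjltm⟩), ?_, ?_⟩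
    · simp only [mem_filter, mem_univ, true_and]
      have : max (((v-1)/m)*m) (((v-1)/n)*n) < v := by omega
      have h2 : v ≤ min (((v-1)/m + 1)*m) (((v-1)/n + 1)*n) := le_min d2 e2
      omega
    · simp only
      have h2 : v ≤ min (((v-1)/m + 1)*m) (((v-1)/n + 1)*n) := le_min d2 e2
      rcases hv3 with h | h
      · have : v = ((v-1)/m + 1)*m := mult_eq m _ v hm h d1 d2
        omega
      · have : v = ((v-1)/n + 1)*n := mult_eq n _ v hn h e1 e2
        omega

variable {n m : ℕ}

def Adj (E : Finset (Fin n × Fin m)) : (Fin n ⊕ Fin m) → (Fin n ⊕ Fin m) → Prop :=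
  fun u v => (∃ p ∈ E, u = Sum.inl p.1 ∧ v = Sum.inr p.2) ∨
             (∃ p ∈ E, u = Sum.inr p.2 ∧ v = Sum.inl p.1)

lemma adj_symm (E : Finset (Fin n × Fin m)) : Symmetric (Adj E) := by
  rintro u v (⟨p, hp, h1, h2⟩ | ⟨p, hp, h1, h2⟩)
  · exact Or.inr ⟨p, hp, h2, h1⟩
  · exact Or.inl ⟨p, hp, h2, h1⟩

def Conn (E : Finset (Fin n × Fin m)) := Relation.ReflTransGen (Adj E)

lemma conn_symm (E : Finset (Fin n × Fin m)) : Symmetric (Conn E) :=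
  fun _ _ h => by
    induction h with
    | refl => exact Relation.ReflTransGen.refl
    | tail _ b c => exact c.head (adj_symm E b)

def setoidE (E : Finset (Fin n × Fin m)) : Setoid (Fin n ⊕ Fin m) :=
  ⟨Conn E, fun _ => Relation.ReflTransGen.refl, fun h => conn_symm E h, fun h1 h2 => h1.trans h2⟩

lemma conn_mono {E F : Finset (Fin n × Fin m)} (h : E ⊆ F) {x y} (hc : Conn E x y) :
    Conn F x y := by
  refine Relation.ReflTransGen.mono ?_ x y hc
  rintro u v (⟨p, hp, h1, h2⟩ | ⟨p, hp, h1, h2⟩)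
  · exact Or.inl ⟨p, h hp, h1, h2⟩
  · exact Or.inr ⟨p, h hp, h1, h2⟩

lemma adj_insert (E : Finset (Fin n × Fin m)) (e : Fin n × Fin m) (u v) :
    Adj (insert e E) u v ↔ Adj E u v ∨ (u = Sum.inl e.1 ∧ v = Sum.inr e.2) ∨
      (u = Sum.inr e.2 ∧ v = Sum.inl e.1) := by
  constructor
  · rintro (⟨p, hp, h1, h2⟩ | ⟨p, hp, h1, h2⟩) <;> rw [mem_insert] at hp
    · rcases hp with rfl | hp
      · exact Or.inr (Or.inl ⟨h1, h2⟩)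
      · exact Or.inl (Or.inl ⟨p, hp, h1, h2⟩)
    · rcases hp with rfl | hp
      · exact Or.inr (Or.inr ⟨h1, h2⟩)
      · exact Or.inl (Or.inr ⟨p, hp, h1, h2⟩)
  · rintro ((⟨p, hp, h1, h2⟩ | ⟨p, hp, h1, h2⟩) | ⟨h1, h2⟩ | ⟨h1, h2⟩)
    · exact Or.inl ⟨p, mem_insert_of_mem hp, h1, h2⟩
    · exact Or.inr ⟨p, mem_insert_of_mem hp, h1, h2⟩
    · exact Or.inl ⟨e, mem_insert_self e E, h1, h2⟩
    · exact Or.inr ⟨e, mem_insert_self e E, h1, h2⟩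

lemma conn_insert (E : Finset (Fin n × Fin m)) (e : Fin n × Fin m) (x y) :
    Conn (insert e E) x y ↔ Conn E x y ∨
      (Conn E x (Sum.inl e.1) ∧ Conn E (Sum.inr e.2) y) ∨
      (Conn E x (Sum.inr e.2) ∧ Conn E (Sum.inl e.1) y) := by
  constructor
  · intro h
    induction h with
    | refl => exact Or.inl Relation.ReflTransGen.refl
    | @tail b c hxb hbc ih =>
      rw [adj_insert] at hbc
      rcases hbc with hbc | ⟨rfl, rfl⟩ | ⟨rfl, rfl⟩
      · rcases ih with h1 | ⟨h1, h2⟩ | ⟨h1, h2⟩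
        · exact Or.inl (h1.tail hbc)
        · exact Or.inr (Or.inl ⟨h1, h2.tail hbc⟩)
        · exact Or.inr (Or.inr ⟨h1, h2.tail hbc⟩)
      · rcases ih with h1 | ⟨h1, h2⟩ | ⟨h1, h2⟩
        · exact Or.inr (Or.inl ⟨h1, Relation.ReflTransGen.refl⟩)
        · exact Or.inr (Or.inl ⟨h1, Relation.ReflTransGen.refl⟩)
        · exact Or.inl h1
      · rcases ih with h1 | ⟨h1, h2⟩ | ⟨h1, h2⟩
        · exact Or.inr (Or.inr ⟨h1, Relation.ReflTransGen.refl⟩)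
        · exact Or.inl h1
        · exact Or.inr (Or.inr ⟨h1, Relation.ReflTransGen.refl⟩)
  · have hstep : Conn (insert e E) (Sum.inl e.1) (Sum.inr e.2) :=
      Relation.ReflTransGen.single (Or.inl ⟨e, mem_insert_self e E, rfl, rfl⟩)
    have hsub : E ⊆ insert e E := subset_insert e E
    rintro (h | ⟨h1, h2⟩ | ⟨h1, h2⟩)
    · exact conn_mono hsub h
    · exact ((conn_mono hsub h1).trans hstep).trans (conn_mono hsub h2)
    · exact ((conn_mono hsub h1).trans (conn_symm _ hstep)).trans (conn_mono hsub h2)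

noncomputable def cQ (E : Finset (Fin n × Fin m)) : ℕ := Nat.card (Quotient (setoidE E))

lemma cQ_insert_ge (E : Finset (Fin n × Fin m)) (e : Fin n × Fin m) :
    cQ E ≤ cQ (insert e E) + 1 := by
  classical
  letI : Fintype (Quotient (setoidE (n := n) (m := m) E)) := Fintype.ofFinite _
  letI : Fintype (Quotient (setoidE (insert e E))) := Fintype.ofFinite _
  set a : Quotient (setoidE E) := Quotient.mk _ (Sum.inl e.1) with ha
  set f : Quotient (setoidE E) → Quotient (setoidE (insert e E)) :=
    Quotient.map id (fun x y h => conn_mono (subset_insert e E) h) with hf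
  have hinj : Set.InjOn f ((univ.erase a : Finset (Quotient (setoidE E))) : Set _) := by
    rintro z hz z' hz' hzz'
    simp only [coe_erase, Set.mem_diff, Set.mem_singleton_iff] at hz hz'
    obtain ⟨x, rfl⟩ := Quotient.exists_rep z
    obtain ⟨y, rfl⟩ := Quotient.exists_rep z'
    have : Conn (insert e E) x y := Quotient.exact (show (Quotient.mk (setoidE (insert e E)) x) = Quotient.mk _ y from hzz')
    rw [conn_insert] at this
    rcases this with h | ⟨h1, h2⟩ | ⟨h1, h2⟩
    · exact Quotient.sound h
    · exact absurd (Quotient.sound h1) hz.2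
    · exact absurd ((Quotient.sound h2).symm) hz'.2
  have hcard := Finset.card_le_card_of_injOn f (fun z _ => mem_univ (f z)) hinj
  have h1 : (univ.erase a).card = Fintype.card (Quotient (setoidE E)) - 1 := by
    rw [Finset.card_erase_of_mem (mem_univ a), Finset.card_univ]
  have h2 : (0:ℕ) < Fintype.card (Quotient (setoidE E)) :=
    Fintype.card_pos_iff.mpr ⟨a⟩
  unfold cQ
  rw [Nat.card_eq_fintype_card, Nat.card_eq_fintype_card]
  rw [h1, Finset.card_univ] at hcard
  omega

lemma cQ_empty : cQ (∅ : Finset (Fin n × Fin m)) = n + m := by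
  have hbij : Function.Bijective (Quotient.mk (setoidE (∅ : Finset (Fin n × Fin m)))) := by
    constructor
    · intro x y h
      have := Quotient.exact h
      have : Conn (∅ : Finset (Fin n × Fin m)) x y := this
      induction this with
      | refl => rfl
      | tail _ hadj _ =>
        rcases hadj with ⟨p, hp, _⟩ | ⟨p, hp, _⟩ <;> exact absurd hp (notMem_empty p)
    · exact Quotient.mk_surjective
  unfold cQ
  rw [← Nat.card_eq_of_bijective _ hbij]
  simp

lemma edges_card_lb (E : Finset (Fin n × Fin m)) : n + m ≤ E.card + cQ E := by
  classical
  induction E using Finset.induction_on with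
  | empty => rw [cQ_empty]; simp
  | @insert e E he ih =>
    have h1 := cQ_insert_ge E e
    rw [Finset.card_insert_of_notMem he]
    omega

lemma mk_eq (E : Finset (Fin n × Fin m)) {x y : Fin n ⊕ Fin m} (h : Conn E x y) :
    Quotient.mk (setoidE E) x = Quotient.mk (setoidE E) y := Quot.sound h

lemma edge_conn (A : Matrix (Fin n) (Fin m) ℝ) (i : Fin n) (j : Fin m) (h : A i j ≠ 0) :
    Conn (supp A) (Sum.inl i) (Sum.inr j) :=
  Relation.ReflTransGen.single (Or.inl ⟨(i,j), by simp [supp, h], rfl, rfl⟩)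

lemma mass_eq (A : Matrix (Fin n) (Fin m) ℝ) (hA : DS n m A)
    (z : Quotient (setoidE (supp A))) :
    ((univ.filter fun i : Fin n =>
        (Quotient.mk (setoidE (supp A)) (Sum.inl i)) = z).card) * m
      = ((univ.filter fun j : Fin m =>
        (Quotient.mk (setoidE (supp A)) (Sum.inr j)) = z).card) * n := by
  classical
  set Rz := univ.filter fun i : Fin n => (Quotient.mk (setoidE (supp A)) (Sum.inl i)) = z with hR
  set Cz := univ.filter fun j : Fin m => (Quotient.mk (setoidE (supp A)) (Sum.inr j)) = z with hC
  have key1 : ∀ i ∈ Rz, ∑ j ∈ Cz, A i j = ∑ j, A i j := by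
    intro i hi
    apply Finset.sum_subset (subset_univ _)
    intro j _ hj
    by_contra hne
    apply hj
    rw [hC, mem_filter]
    refine ⟨mem_univ _, ?_⟩
    rw [hR, mem_filter] at hi
    rw [← hi.2]
    exact mk_eq _ (conn_symm _ (edge_conn A i j hne))
  have key2 : ∀ j ∈ Cz, ∑ i ∈ Rz, A i j = ∑ i, A i j := by
    intro j hj
    apply Finset.sum_subset (subset_univ _)
    intro i _ hi
    by_contra hne
    apply hi
    rw [hR, mem_filter]
    refine ⟨mem_univ _, ?_⟩
    rw [hC, mem_filter] at hj
    rw [← hj.2]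
    exact mk_eq _ (edge_conn A i j hne)
  have hreal : (Rz.card : ℝ) * m = (Cz.card : ℝ) * n := by
    calc (Rz.card : ℝ) * m = ∑ _i ∈ Rz, (m : ℝ) := by rw [Finset.sum_const, nsmul_eq_mul]
      _ = ∑ i ∈ Rz, ∑ j, A i j := Finset.sum_congr rfl (fun i _ => (hA.2.2 i).symm)
      _ = ∑ i ∈ Rz, ∑ j ∈ Cz, A i j := Finset.sum_congr rfl (fun i hi => (key1 i hi).symm)
      _ = ∑ j ∈ Cz, ∑ i ∈ Rz, A i j := Finset.sum_comm
      _ = ∑ j ∈ Cz, ∑ i, A i j := Finset.sum_congr rfl (fun j hj => key2 j hj)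
      _ = ∑ _j ∈ Cz, (n : ℝ) := Finset.sum_congr rfl (fun j _ => hA.2.1 j)
      _ = (Cz.card : ℝ) * n := by rw [Finset.sum_const, nsmul_eq_mul]
  exact_mod_cast hreal

lemma rows_nonempty (A : Matrix (Fin n) (Fin m) ℝ) (hA : DS n m A) (hn : 0 < n)
    (z : Quotient (setoidE (supp A))) :
    (univ.filter fun i : Fin n =>
      (Quotient.mk (setoidE (supp A)) (Sum.inl i)) = z).Nonempty := by
  classical
  obtain ⟨v, rfl⟩ := Quotient.exists_rep z
  rcases v with i | j
  · exact ⟨i, mem_filter.mpr ⟨mem_univ _, rfl⟩⟩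
  · have hsum : ∑ i, A i j = (n : ℝ) := hA.2.1 j
    have : ∃ i, A i j ≠ 0 := by
      by_contra hc
      push_neg at hc
      rw [Finset.sum_congr rfl (fun i _ => hc i), Finset.sum_const_zero] at hsum
      exact (Nat.cast_ne_zero.mpr hn.ne') hsum.symm
    obtain ⟨i, hi⟩ := this
    exact ⟨i, mem_filter.mpr ⟨mem_univ _, mk_eq _ (edge_conn A i j hi)⟩⟩

lemma cQ_le_gcd (A : Matrix (Fin n) (Fin m) ℝ) (hA : DS n m A) (hn : 0 < n) (hm : 0 < m) :
    cQ (supp A) ≤ Nat.gcd n m := by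
  classical
  letI : Fintype (Quotient (setoidE (supp A))) := Fintype.ofFinite _
  set g := Nat.gcd n m with hg
  have hgpos : 0 < g := Nat.gcd_pos_of_pos_left m hn
  set n' := n / g with hn'
  set m' := m / g with hm'
  have hgn : g ∣ n := Nat.gcd_dvd_left n m
  have hgm : g ∣ m := Nat.gcd_dvd_right n m
  have hnn' : n = g * n' := (Nat.mul_div_cancel' hgn).symm
  have hmm' : m = g * m' := (Nat.mul_div_cancel' hgm).symm
  have hco : Nat.Coprime n' m' := Nat.coprime_div_gcd_div_gcd hgpos
  have hn'pos : 0 < n' := by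
    rcases Nat.eq_zero_or_pos n' with h | h
    · rw [h, Nat.mul_zero] at hnn'; omega
    · exact h
  have hfib : ∑ z : Quotient (setoidE (supp A)),
      (univ.filter fun i : Fin n =>
        (Quotient.mk (setoidE (supp A)) (Sum.inl i)) = z).card = n := by
    rw [← Finset.card_eq_sum_card_fiberwise
      (fun (i : Fin n) (_ : i ∈ univ) => mem_univ (Quotient.mk (setoidE (supp A)) (Sum.inl i)))]
    simp
  have hlb : ∀ z : Quotient (setoidE (supp A)),
      n' ≤ (univ.filter fun i : Fin n =>
        (Quotient.mk (setoidE (supp A)) (Sum.inl i)) = z).card := by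
    intro z
    set a := (univ.filter fun i : Fin n =>
        (Quotient.mk (setoidE (supp A)) (Sum.inl i)) = z).card with hadef
    set b := (univ.filter fun j : Fin m =>
        (Quotient.mk (setoidE (supp A)) (Sum.inr j)) = z).card with hbdef
    have hmass : a * m = b * n := mass_eq A hA z
    have hapos : 0 < a := Finset.card_pos.mpr (rows_nonempty A hA hn z)
    have hcancel : a * m' = b * n' := by
      have h1 : g * (a * m') = g * (b * n') := by
        rw [hnn', hmm'] at hmass
        calc g * (a * m') = a * (g * m') := by ring
          _ = b * (g * n') := hmass
          _ = g * (b * n') := by ring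
      exact Nat.eq_of_mul_eq_mul_left hgpos h1
    have hdvd : n' ∣ a := by
      have : n' ∣ a * m' := ⟨b, by rw [hcancel]; ring⟩
      exact (Nat.Coprime.dvd_of_dvd_mul_right hco this)
    exact Nat.le_of_dvd hapos hdvd
  have hsum_lb : (Fintype.card (Quotient (setoidE (supp A)))) * n' ≤ n := by
    calc (Fintype.card (Quotient (setoidE (supp A)))) * n'
        = ∑ _z : Quotient (setoidE (supp A)), n' := by
          rw [Finset.sum_const, smul_eq_mul, Finset.card_univ]
      _ ≤ ∑ z : Quotient (setoidE (supp A)), (univ.filter fun i : Fin n =>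
            (Quotient.mk (setoidE (supp A)) (Sum.inl i)) = z).card :=
          Finset.sum_le_sum (fun z _ => hlb z)
      _ = n := hfib
  unfold cQ
  rw [Nat.card_eq_fintype_card]
  by_contra hc
  push_neg at hc
  have : (g+1) * n' ≤ Fintype.card (Quotient (setoidE (supp A))) * n' :=
    Nat.mul_le_mul_right n' hc
  nlinarith

lemma lower_bound (A : Matrix (Fin n) (Fin m) ℝ) (hA : DS n m A) (hn : 0 < n) (hm : 0 < m) :
    n + m - Nat.gcd n m ≤ (supp A).card := by
  have h1 := edges_card_lb (supp A)
  have h2 := cQ_le_gcd A hA hn hm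
  omega


lemma DS_W (n m : ℕ) (hn : 0 < n) (hm : 0 < m) : DS n m (W n m) := by
  refine ⟨fun i j => Nat.cast_nonneg _, fun j => ?_, fun i => ?_⟩
  · have := colsum_nat n m hm j
    rw [show ∑ i, W n m i j = ((∑ i : Fin n,
        (min (((i:ℕ)+1)*m) (((j:ℕ)+1)*n) - max ((i:ℕ)*m) ((j:ℕ)*n) : ℕ) : ℕ) : ℝ) from by
      push_cast; rfl, this]
  · have := rowsum_nat n m i
    rw [show ∑ j, W n m i j = ((∑ j : Fin m,
        (min (((i:ℕ)+1)*m) (((j:ℕ)+1)*n) - max ((i:ℕ)*m) ((j:ℕ)*n) : ℕ) : ℕ) : ℝ) from by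
      push_cast; rfl, this]

lemma supp_W_card (n m : ℕ) (hn : 0 < n) (hm : 0 < m) :
    (supp (W n m)).card = n + m - Nat.gcd n m := by
  rw [← card_overlap n m hn hm]
  congr 1
  ext ⟨i, j⟩
  simp only [supp, mem_filter, mem_univ, true_and]
  simp only [W]
  rw [ne_eq, Nat.cast_eq_zero, Nat.sub_eq_zero_iff_le, not_le]

theorem stmt2 (n m : ℕ) (hn : 1 < n) (hnm : n ≤ m) :
    S n m = n + m - Nat.gcd n m := by
  have hn0 : 0 < n := by omega
  have hm0 : 0 < m := by omega
  have hmem : n + m - Nat.gcd n m ∈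
      {k | ∃ A : Matrix (Fin n) (Fin m) ℝ, DS n m A ∧ (supp A).card = k} :=
    ⟨W n m, DS_W n m hn0 hm0, supp_W_card n m hn0 hm0⟩
  unfold S
  apply le_antisymm
  · exact Nat.sInf_le hmem
  · apply le_csInf ⟨_, hmem⟩
    rintro k ⟨A, hA, rfl⟩
    exact lower_bound A hA hn0 hm0
end

section
/- A matrix M ∈ M(n,m) is extremal if and only if there is no matrix B ∈ M(n,m) with supp B strictly contained in supp M. -/
open Finset

lemma mem_supp_iff {n m : ℕ} (A : Matrix (Fin n) (Fin m) ℝ) (p : Fin n × Fin m) :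
    p ∈ supp A ↔ A p.1 p.2 ≠ 0 := by
  simp [supp]

theorem stmt7 (n m : ℕ) (M : Matrix (Fin n) (Fin m) ℝ) (hM : DS n m M) :
    IsExtremal M ↔ ¬ ∃ B : Matrix (Fin n) (Fin m) ℝ, DS n m B ∧ supp B ⊂ supp M := by
  obtain ⟨hMpos, hMcol, hMrow⟩ := hM
  constructor
  · rintro ⟨-, hext⟩ ⟨B, hB, hsub⟩
    obtain ⟨hBpos, hBcol, hBrow⟩ := hB
    have hne : (supp M).Nonempty := by
      obtain ⟨p, hp, -⟩ := Finset.exists_of_ssubset hsub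
      exact ⟨p, hp⟩
    obtain ⟨q, hq⟩ := hne
    set c : ℝ := (supp M).inf' ⟨q, hq⟩ (fun p => M p.1 p.2) with hc
    have hcpos : 0 < c := by
      rw [hc]; apply (Finset.lt_inf'_iff (H := _)).2
      intro p hp
      exact lt_of_le_of_ne (hMpos p.1 p.2) (Ne.symm ((mem_supp_iff M p).1 hp))
    set K : ℝ := (univ : Finset (Fin n × Fin m)).sup' ⟨q, mem_univ q⟩ (fun p => B p.1 p.2)
      with hK
    have hKle : ∀ i j, B i j ≤ K := fun i j =>
      Finset.le_sup' (fun p : Fin n × Fin m => B p.1 p.2) (mem_univ (i, j))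
    have hK0 : 0 ≤ K := le_trans (hBpos q.1 q.2) (hKle q.1 q.2)
    set ε : ℝ := c / (K + 1) with hε
    have hεpos : 0 < ε := div_pos hcpos (by linarith)
    have hεK : ε * K < c := by
      have : ε * (K + 1) = c := by rw [hε]; exact div_mul_cancel₀ c (by linarith)
      nlinarith
    set A : Matrix (Fin n) (Fin m) ℝ := fun i j => (1 + ε) * M i j - ε * B i j with hA
    have hBsubM : ∀ i j, M i j = 0 → B i j = 0 := by
      intro i j h0
      by_contra hB0
      have : (i, j) ∈ supp M := hsub.1 ((mem_supp_iff B (i, j)).2 hB0)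
      exact ((mem_supp_iff M (i, j)).1 this) h0
    have hApos : ∀ i j, 0 ≤ A i j := by
      intro i j
      rcases eq_or_ne (M i j) 0 with h0 | h0
      · simp [hA, h0, hBsubM i j h0]
      · have hmem : (i, j) ∈ supp M := (mem_supp_iff M (i, j)).2 h0
        have hcle : c ≤ M i j := Finset.inf'_le _ hmem
        have h1 : ε * B i j ≤ ε * K := by nlinarith [hBpos i j, hKle i j]
        have : ε * B i j < M i j := lt_of_le_of_lt h1 (lt_of_lt_of_le hεK hcle)
        simp only [hA]
        nlinarith [hMpos i j]
    have hADS : DS n m A := by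
      refine ⟨hApos, ?_, ?_⟩
      · intro j
        simp only [hA, Finset.sum_sub_distrib, ← Finset.mul_sum, hMcol j, hBcol j]
        ring
      · intro i
        simp only [hA, Finset.sum_sub_distrib, ← Finset.mul_sum, hMrow i, hBrow i]
        ring
    have ht0 : (0 : ℝ) < 1 / (1 + ε) := by positivity
    have ht1 : 1 / (1 + ε) < 1 := by
      rw [div_lt_one (by linarith)]; linarith
    have heq : M = (1 / (1 + ε)) • A + (1 - 1 / (1 + ε)) • B := by
      funext i j
      simp only [Matrix.add_apply, Matrix.smul_apply, smul_eq_mul]; simp only [hA]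
      field_simp
      ring
    have hBM : B = M := (hext A B (1 / (1 + ε)) hADS ⟨hBpos, hBcol, hBrow⟩ ht0 ht1 heq).2
    rw [hBM] at hsub
    exact (ssubset_irrefl _) hsub
  · intro h
    refine ⟨⟨hMpos, hMcol, hMrow⟩, ?_⟩
    intro A B t hA hB ht0 ht1 heq
    obtain ⟨hApos, hAcol, hArow⟩ := hA
    obtain ⟨hBpos, hBcol, hBrow⟩ := hB
    have hentry : ∀ i j, M i j = t * A i j + (1 - t) * B i j := by
      intro i j
      have := congrFun (congrFun heq i) j
      simpa [Matrix.add_apply, Matrix.smul_apply] using this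
    have hzero : ∀ i j, M i j = 0 → A i j = 0 ∧ B i j = 0 := by
      intro i j h0
      have h := hentry i j
      rw [h0] at h
      constructor <;> nlinarith [hApos i j, hBpos i j]
    have hAM : A = M := by
      by_contra hne
      -- there is an entry with A < M
      have hTne : ∃ p : Fin n × Fin m, A p.1 p.2 < M p.1 p.2 := by
        by_contra hT
        push_neg at hT
        apply hne
        funext i j
        have hrow : ∑ j', A i j' = ∑ j', M i j' := by rw [hArow i, hMrow i]
        have := (Finset.sum_eq_sum_iff_of_le (fun j' _ => hT (i, j'))).1 hrow.symm
        exact (this j (mem_univ j)).symm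
      set T : Finset (Fin n × Fin m) :=
        univ.filter (fun p => A p.1 p.2 < M p.1 p.2) with hT
      obtain ⟨p1, hp1⟩ := hTne
      have hp1T : p1 ∈ T := by simp [hT, hp1]
      set f : Fin n × Fin m → ℝ := fun p => M p.1 p.2 / (M p.1 p.2 - A p.1 p.2) with hf
      set s : ℝ := T.inf' ⟨p1, hp1T⟩ f with hs
      have hTpos : ∀ p ∈ T, 0 < M p.1 p.2 - A p.1 p.2 ∧ 0 < M p.1 p.2 := by
        intro p hp
        simp only [hT, Finset.mem_filter] at hp
        constructor
        · linarith [hp.2]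
        · exact lt_of_le_of_lt (hApos p.1 p.2) hp.2
      have hspos : 0 < s := by
        rw [hs]; apply (Finset.lt_inf'_iff (H := _)).2
        intro p hp
        exact div_pos (hTpos p hp).2 (hTpos p hp).1
      set C : Matrix (Fin n) (Fin m) ℝ := fun i j => M i j + s * (A i j - M i j) with hC
      have hCpos : ∀ i j, 0 ≤ C i j := by
        intro i j
        rcases lt_or_ge (A i j) (M i j) with hlt | hle
        · have hmem : (i, j) ∈ T := by simp [hT, hlt]
          have hsle : s ≤ M i j / (M i j - A i j) := Finset.inf'_le f hmem
          have hd : 0 < M i j - A i j := (hTpos (i, j) hmem).1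
          have : s * (M i j - A i j) ≤ M i j := by
            rw [← le_div_iff₀ hd]; exact hsle
          simp only [hC]; nlinarith
        · simp only [hC]; nlinarith [hMpos i j]
      have hCDS : DS n m C := by
        refine ⟨hCpos, ?_, ?_⟩
        · intro j
          simp only [hC, Finset.sum_add_distrib, ← Finset.mul_sum,
            Finset.sum_sub_distrib, hMcol j, hAcol j]
          ring
        · intro i
          simp only [hC, Finset.sum_add_distrib, ← Finset.mul_sum,
            Finset.sum_sub_distrib, hMrow i, hArow i]
          ring
      have hCsub : supp C ⊂ supp M := by
        constructor
        · intro p hp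
          rw [mem_supp_iff] at hp ⊢
          intro h0
          apply hp
          simp only [hC, h0, (hzero p.1 p.2 h0).1]
          ring
        · intro hMC
          obtain ⟨p0, hp0T, hp0eq⟩ := Finset.exists_mem_eq_inf' ⟨p1, hp1T⟩ f
          have hp0M : p0 ∈ supp M :=
            (mem_supp_iff M p0).2 (ne_of_gt (hTpos p0 hp0T).2)
          have hp0C : C p0.1 p0.2 = 0 := by
            have hd : M p0.1 p0.2 - A p0.1 p0.2 ≠ 0 := ne_of_gt (hTpos p0 hp0T).1
            have hsp : s = f p0 := hs.trans hp0eq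
            simp only [hC, hsp, hf]
            rw [show A p0.1 p0.2 - M p0.1 p0.2 = -(M p0.1 p0.2 - A p0.1 p0.2) by ring, mul_neg,
              div_mul_cancel₀ _ hd]
            ring
          have : p0 ∈ supp C := hMC hp0M
          exact ((mem_supp_iff C p0).1 this) hp0C
      exact h ⟨C, hCDS, hCsub⟩
    refine ⟨hAM, ?_⟩
    funext i j
    have := hentry i j
    rw [hAM] at this
    have ht : (1 - t) ≠ 0 := by linarith
    have : (1 - t) * B i j = (1 - t) * M i j := by nlinarith
    exact mul_left_cancel₀ ht this
end

section
/- Every matrix in M(n,m) whose support has minimum cardinality S(n,m) is an extreme point of the convex set M(n,m). -/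
open Finset

lemma aux_min_supp {n m : ℕ} (M A : Matrix (Fin n) (Fin m) ℝ)
    (hM : DS n m M) (hmin : (supp M).card = S n m)
    (hA : DS n m A) (hzero : ∀ i j, M i j = 0 → A i j = 0) : A = M := by
  by_contra hne
  set D : Matrix (Fin n) (Fin m) ℝ := A - M with hD
  have hDrow : ∀ i, ∑ j, D i j = 0 := by
    intro i
    simp [hD, Matrix.sub_apply, Finset.sum_sub_distrib, hA.2.2 i, hM.2.2 i]
  have hDcol : ∀ j, ∑ i, D i j = 0 := by
    intro j
    simp [hD, Matrix.sub_apply, Finset.sum_sub_distrib, hA.2.1 j, hM.2.1 j]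
  have hDne : D ≠ 0 := sub_ne_zero.mpr hne
  have hneg : ∃ i j, D i j < 0 := by
    by_contra h
    push_neg at h
    apply hDne
    ext i j
    have := (Finset.sum_eq_zero_iff_of_nonneg (fun j _ => h i j)).mp (hDrow i) j (mem_univ j)
    simpa using this
  obtain ⟨i0, j0, h0⟩ := hneg
  set N : Finset (Fin n × Fin m) := univ.filter fun p => D p.1 p.2 < 0 with hN
  have hNne : N.Nonempty := ⟨(i0, j0), by simp [hN, h0]⟩
  obtain ⟨p0, hp0N, hp0min⟩ := N.exists_min_image (fun p => M p.1 p.2 / (-D p.1 p.2)) hNne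
  have hp0D : D p0.1 p0.2 < 0 := by simpa [hN] using hp0N
  have hMp0 : 0 < M p0.1 p0.2 := by
    rcases lt_or_eq_of_le (hM.1 p0.1 p0.2) with h | h
    · exact h
    · exfalso
      have hz := hzero p0.1 p0.2 h.symm
      rw [hD] at hp0D
      simp only [Matrix.sub_apply, hz, ← h, sub_zero] at hp0D
      linarith
  set t : ℝ := M p0.1 p0.2 / (-D p0.1 p0.2) with ht
  have htpos : 0 < t := div_pos hMp0 (by linarith)
  set C : Matrix (Fin n) (Fin m) ℝ := fun i j => M i j + t * D i j with hC
  have hCnn : ∀ i j, 0 ≤ C i j := by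
    intro i j
    by_cases hd : D i j < 0
    · have hmem : (i, j) ∈ N := by simp [hN, hd]
      have hmin' := hp0min (i, j) hmem
      have h1 : t * (-D i j) ≤ M i j := by
        rw [← le_div_iff₀ (by linarith : (0:ℝ) < -D i j)]
        exact hmin'
      simp only [hC]
      nlinarith
    · push_neg at hd
      have := hM.1 i j
      simp only [hC]
      nlinarith
  have hCDS : DS n m C := by
    refine ⟨hCnn, ?_, ?_⟩
    · intro j
      simp only [hC]
      rw [Finset.sum_add_distrib, ← Finset.mul_sum, hDcol j, hM.2.1 j]
      ring
    · intro i
      simp only [hC]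
      rw [Finset.sum_add_distrib, ← Finset.mul_sum, hDrow i, hM.2.2 i]
      ring
  have hsubset : supp C ⊂ supp M := by
    constructor
    · intro p hp
      simp only [supp, mem_filter, mem_univ, true_and] at hp ⊢
      intro hMp
      apply hp
      have hz := hzero p.1 p.2 hMp
      simp [hC, hMp, hD, Matrix.sub_apply, hz]
    · intro hcon
      have hp0M : p0 ∈ supp M := by
        simp [supp, ne_of_gt hMp0]
      have hbad := hcon hp0M
      simp only [supp, mem_filter, mem_univ, true_and] at hbad
      apply hbad
      have hDne0 : -D p0.1 p0.2 ≠ 0 := by linarith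
      simp only [hC, ht]
      field_simp
      rw [div_self (ne_of_lt hp0D)]
      ring
  have hlt : (supp C).card < (supp M).card := Finset.card_lt_card hsubset
  have hle : S n m ≤ (supp C).card := Nat.sInf_le ⟨C, hCDS, rfl⟩
  omega

theorem stmt8 (n m : ℕ) (M : Matrix (Fin n) (Fin m) ℝ)
    (hM : DS n m M) (hmin : (supp M).card = S n m) :
    IsExtremal M := by
  refine ⟨hM, ?_⟩
  intro A B t hA hB ht0 ht1 heq
  have key : ∀ i j, M i j = 0 → A i j = 0 ∧ B i j = 0 := by
    intro i j h
    have hij := congrFun (congrFun heq i) j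
    simp only [Matrix.add_apply, Matrix.smul_apply, smul_eq_mul, h] at hij
    have h1 : 0 ≤ t * A i j := mul_nonneg ht0.le (hA.1 i j)
    have h2 : 0 ≤ (1 - t) * B i j := mul_nonneg (by linarith) (hB.1 i j)
    have h3 : t * A i j = 0 := by linarith
    have h4 : (1 - t) * B i j = 0 := by linarith
    constructor
    · rcases mul_eq_zero.mp h3 with h | h
      · linarith
      · exact h
    · rcases mul_eq_zero.mp h4 with h | h
      · linarith
      · exact h
  exact ⟨aux_min_supp M A hM hmin hA (fun i j h => (key i j h).1),
         aux_min_supp M B hM hmin hB (fun i j h => (key i j h).2)⟩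
end

section
/- A matrix M ∈ M(n,m) is extremal if and only if its bipartite graph G(M) — with vertex set the disjoint union of rows and columns, and an edge between row i and column j whenever M i j > 0 — contains no cycle. -/
open Finset

def graphOf {n m : ℕ} (M : Matrix (Fin n) (Fin m) ℝ) : SimpleGraph (Fin n ⊕ Fin m) where
  Adj u v := match u, v with
    | Sum.inl i, Sum.inr j => 0 < M i j
    | Sum.inr j, Sum.inl i => 0 < M i j
    | _, _ => False
  symm := ⟨by intro u v h; cases u <;> cases v <;> simp_all⟩
  loopless := ⟨by intro u h; cases u <;> simp_all⟩

section Aux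
variable {n m : ℕ}

def Pert (M C : Matrix (Fin n) (Fin m) ℝ) : Prop :=
  (∀ i, ∑ j, C i j = 0) ∧ (∀ j, ∑ i, C i j = 0) ∧ (∀ i j, M i j = 0 → C i j = 0)

noncomputable def emat (i : Fin n) (j : Fin m) : Matrix (Fin n) (Fin m) ℝ :=
  fun a b => if a = i ∧ b = j then 1 else 0

lemma emat_row (i : Fin n) (j : Fin m) (a : Fin n) :
    ∑ b, emat i j a b = if a = i then (1:ℝ) else 0 := by
  rcases eq_or_ne a i with h | h <;> simp [emat, h]

lemma emat_col (i : Fin n) (j : Fin m) (b : Fin m) :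
    ∑ a, emat i j a b = if b = j then (1:ℝ) else 0 := by
  rcases eq_or_ne b j with h | h <;> simp [emat, h, and_comm]

noncomputable def stepm (u v : Fin n ⊕ Fin m) : Matrix (Fin n) (Fin m) ℝ :=
  match u, v with
  | Sum.inl i, Sum.inr j => emat i j
  | Sum.inr j, Sum.inl i => - emat i j
  | _, _ => 0

noncomputable def wmat (M : Matrix (Fin n) (Fin m) ℝ) :
    ∀ {u v : Fin n ⊕ Fin m}, (graphOf M).Walk u v → Matrix (Fin n) (Fin m) ℝ
  | _, _, SimpleGraph.Walk.nil => 0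
  | _, _, @SimpleGraph.Walk.cons _ _ u w _ _ p => stepm u w + wmat M p

lemma wmat_row (M : Matrix (Fin n) (Fin m) ℝ) {u v} (p : (graphOf M).Walk u v) (i : Fin n) :
    ∑ j, wmat M p i j =
      (if u = Sum.inl i then (1:ℝ) else 0) - (if v = Sum.inl i then 1 else 0) := by
  induction p with
  | nil => simp [wmat]
  | @cons a b c h p ih =>
      have : ∑ j, wmat M (SimpleGraph.Walk.cons h p) i j
          = (∑ j, stepm a b i j) + ∑ j, wmat M p i j := by
        simp [wmat, Finset.sum_add_distrib]
      rw [this, ih]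
      simp only [graphOf] at h
      rcases a with i' | j' <;> rcases b with i'' | j''
      · exact h.elim
      · simp [stepm, emat_row, eq_comm]; ring
      · simp [stepm, emat_row, eq_comm]; ring
      · exact h.elim

lemma wmat_col (M : Matrix (Fin n) (Fin m) ℝ) {u v} (p : (graphOf M).Walk u v) (j : Fin m) :
    ∑ i, wmat M p i j =
      (if v = Sum.inr j then (1:ℝ) else 0) - (if u = Sum.inr j then 1 else 0) := by
  induction p with
  | nil => simp [wmat]
  | @cons a b c h p ih =>
      have : ∑ i, wmat M (SimpleGraph.Walk.cons h p) i j
          = (∑ i, stepm a b i j) + ∑ i, wmat M p i j := by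
        simp [wmat, Finset.sum_add_distrib]
      rw [this, ih]
      simp only [graphOf] at h
      rcases a with i' | j' <;> rcases b with i'' | j''
      · exact h.elim
      · simp [stepm, emat_col, eq_comm]; try ring
      · simp [stepm, emat_col, eq_comm]; try ring
      · exact h.elim

lemma wmat_eq_zero (M : Matrix (Fin n) (Fin m) ℝ) {u v} (p : (graphOf M).Walk u v)
    (i : Fin n) (j : Fin m) (he : s(Sum.inl i, Sum.inr j) ∉ p.edges) :
    wmat M p i j = 0 := by
  induction p with
  | nil => simp [wmat]
  | @cons a b c h p ih =>
      simp only [SimpleGraph.Walk.edges_cons, List.mem_cons, not_or] at he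
      have h2 := ih he.2
      have h1 : stepm a b i j = 0 := by
        rcases a with i' | j' <;> rcases b with i'' | j''
        · rfl
        · simp only [stepm, emat, ite_eq_right_iff, and_imp]
          rintro rfl rfl
          exact absurd rfl he.1
        · simp only [stepm, emat, Matrix.neg_apply, neg_eq_zero, ite_eq_right_iff, and_imp]
          rintro rfl rfl
          exact absurd (Sym2.eq_swap) he.1
        · rfl
      simp [wmat, h1, h2]

lemma wmat_ne_zero (M : Matrix (Fin n) (Fin m) ℝ) {v} (c : (graphOf M).Walk v v)
    (hc : c.IsCycle) : wmat M c ≠ 0 := by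
  cases c with
  | nil => exact absurd hc SimpleGraph.Walk.IsCycle.not_of_nil
  | @cons _ b _ h p =>
      have hnd : s(v, b) ∉ p.edges := by
        have := hc.edges_nodup
        simp only [SimpleGraph.Walk.edges_cons, List.nodup_cons] at this
        exact this.1
      rcases v with i | j <;> rcases b with i' | j'
      · exact False.elim h
      · intro h0
        have : wmat M (SimpleGraph.Walk.cons h p) i j' = 0 := by rw [h0]; rfl
        rw [show wmat M (SimpleGraph.Walk.cons h p) = stepm (Sum.inl i) (Sum.inr j') + wmat M p from rfl,
          Matrix.add_apply, wmat_eq_zero M p i j' hnd] at this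
        simp [stepm, emat] at this
      · intro h0
        have : wmat M (SimpleGraph.Walk.cons h p) i' j = 0 := by rw [h0]; rfl
        have hnd' : s(Sum.inl i', Sum.inr j) ∉ p.edges := by rwa [Sym2.eq_swap]
        rw [show wmat M (SimpleGraph.Walk.cons h p) = stepm (Sum.inr j) (Sum.inl i') + wmat M p from rfl,
          Matrix.add_apply, wmat_eq_zero M p i' j hnd'] at this
        simp [stepm, emat] at this
      · exact False.elim h

lemma wmat_pert (M : Matrix (Fin n) (Fin m) ℝ) {v}
    (c : (graphOf M).Walk v v) : Pert M (wmat M c) := by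
  refine ⟨fun i => by rw [wmat_row]; ring, fun j => by rw [wmat_col]; ring, fun i j hij => ?_⟩
  apply wmat_eq_zero
  intro he
  have := SimpleGraph.Walk.adj_of_mem_edges c he
  simp only [graphOf] at this
  exact this.ne' hij


end Aux

lemma extremal_iff_pert {n m : ℕ} (M : Matrix (Fin n) (Fin m) ℝ) (hM : DS n m M) :
    IsExtremal M ↔ ∀ C, Pert M C → C = 0 := by
  constructor
  · intro hext C hC
    by_contra hC0
    have hne : ∃ p : Fin n × Fin m, C p.1 p.2 ≠ 0 := by
      by_contra h
      push_neg at h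
      exact hC0 (by ext i j; exact h (i, j))
    obtain ⟨p0, hp0⟩ := hne
    set f : Fin n × Fin m → ℝ := fun p =>
      if C p.1 p.2 = 0 then 1 else M p.1 p.2 / |C p.1 p.2| with hf
    have hfpos : ∀ p, 0 < f p := by
      intro p
      by_cases h : C p.1 p.2 = 0
      · simp [hf, h]
      · have hMp : M p.1 p.2 ≠ 0 := fun h0 => h (hC.2.2 _ _ h0)
        have : 0 < M p.1 p.2 := lt_of_le_of_ne (hM.1 _ _) (Ne.symm hMp)
        simp only [hf, h, if_false]
        positivity
    have hne' : (univ : Finset (Fin n × Fin m)).Nonempty := ⟨p0, mem_univ _⟩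
    set ε : ℝ := univ.inf' hne' f with hε
    have hεpos : 0 < ε := by
      rw [hε, Finset.lt_inf'_iff]
      exact fun p _ => hfpos p
    have hkey : ∀ i j, ε * |C i j| ≤ M i j := by
      intro i j
      by_cases h : C i j = 0
      · simp [h, hM.1 i j]
      · have hle : ε ≤ f (i, j) := Finset.inf'_le _ (mem_univ _)
        have hMp : 0 < M i j :=
          lt_of_le_of_ne (hM.1 _ _) (Ne.symm fun h0 => h (hC.2.2 _ _ h0))
        have habs : 0 < |C i j| := abs_pos.mpr h
        simp only [hf, h, if_false] at hle
        calc ε * |C i j| ≤ (M i j / |C i j|) * |C i j| := by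
              exact mul_le_mul_of_nonneg_right hle habs.le
          _ = M i j := by field_simp
    have hDSA : DS n m (M + ε • C) := by
      refine ⟨fun i j => ?_, fun j => ?_, fun i => ?_⟩
      · have := hkey i j
        have h1 : ε * C i j ≥ -(ε * |C i j|) := by
          have := neg_abs_le (C i j)
          nlinarith [hεpos.le]
        simp only [Matrix.add_apply, Matrix.smul_apply, smul_eq_mul]
        linarith
      · simp [Finset.sum_add_distrib, ← Finset.mul_sum, hM.2.1 j, hC.2.1 j]
      · simp [Finset.sum_add_distrib, ← Finset.mul_sum, hM.2.2 i, hC.1 i]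
    have hDSB : DS n m (M - ε • C) := by
      refine ⟨fun i j => ?_, fun j => ?_, fun i => ?_⟩
      · have := hkey i j
        have h1 : ε * C i j ≤ ε * |C i j| := by
          have := le_abs_self (C i j)
          nlinarith [hεpos.le]
        simp only [Matrix.sub_apply, Matrix.smul_apply, smul_eq_mul]
        linarith
      · simp [Finset.sum_sub_distrib, ← Finset.mul_sum, hM.2.1 j, hC.2.1 j]
      · simp [Finset.sum_sub_distrib, ← Finset.mul_sum, hM.2.2 i, hC.1 i]
    have hcomb : M = (1/2 : ℝ) • (M + ε • C) + (1 - 1/2 : ℝ) • (M - ε • C) := by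
      ext i j
      simp [Matrix.add_apply, Matrix.smul_apply, Matrix.sub_apply]
      ring
    obtain ⟨hA, _⟩ := hext.2 _ _ (1/2) hDSA hDSB (by norm_num) (by norm_num) hcomb
    have : ε • C = 0 := by
      ext i j
      have h2 := congrFun (congrFun hA i) j
      simp only [Matrix.add_apply] at h2
      simp only [Matrix.zero_apply]
      linarith
    exact hC0 (by
      ext i j
      have := congrFun (congrFun this i) j
      simp only [Matrix.smul_apply, smul_eq_mul, Matrix.zero_apply] at this
      rcases mul_eq_zero.mp this with h | h
      · exact absurd h hεpos.ne'
      · exact h)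
  · intro hpert
    refine ⟨hM, fun A B t hA hB ht ht1 hMe => ?_⟩
    have hCA : Pert M (A - M) := by
      refine ⟨fun i => ?_, fun j => ?_, fun i j h0 => ?_⟩
      · simp [Finset.sum_sub_distrib, hA.2.2 i, hM.2.2 i]
      · simp [Finset.sum_sub_distrib, hA.2.1 j, hM.2.1 j]
      · have hme := congrFun (congrFun hMe i) j
        simp only [Matrix.add_apply, Matrix.smul_apply, smul_eq_mul] at hme
        have hA0 : A i j = 0 := by
          nlinarith [hA.1 i j, hB.1 i j, ht, ht1]
        simp [Matrix.sub_apply, hA0, h0]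
    have hAM : A = M := by
      have := hpert _ hCA
      ext i j
      have h2 := congrFun (congrFun this i) j
      simp only [Matrix.sub_apply, Matrix.zero_apply] at h2
      linarith
    refine ⟨hAM, ?_⟩
    ext i j
    have hme := congrFun (congrFun hMe i) j
    rw [hAM] at hme
    simp only [Matrix.add_apply, Matrix.smul_apply, smul_eq_mul] at hme
    have h1t : (1 - t) ≠ 0 := by linarith
    have : (1 - t) * B i j = (1 - t) * M i j := by linarith
    exact mul_left_cancel₀ h1t this

lemma acyclic_pert {n m : ℕ} (M : Matrix (Fin n) (Fin m) ℝ) (hM : DS n m M)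
    (hac : (graphOf M).IsAcyclic) : ∀ C, Pert M C → C = 0 := by
  classical
  intro C hC
  ext i j
  simp only [Matrix.zero_apply]
  by_contra hij
  have hMij : 0 < M i j := lt_of_le_of_ne (hM.1 i j) (Ne.symm fun h0 => hij (hC.2.2 i j h0))
  have hadj : (graphOf M).Adj (Sum.inl i) (Sum.inr j) := hMij
  have hbr := (SimpleGraph.isAcyclic_iff_forall_adj_isBridge.mp hac) hadj
  rw [SimpleGraph.isBridge_iff] at hbr
  set G' := graphOf M \ SimpleGraph.fromEdgeSet {s(Sum.inl i, Sum.inr j)} with hG'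
  have hnr : ¬ G'.Reachable (Sum.inl i) (Sum.inr j) := hbr
  set χ : (Fin n ⊕ Fin m) → ℝ := fun v => if G'.Reachable (Sum.inl i) v then 1 else 0 with hχ
  have hedge : ∀ i' j', C i' j' ≠ 0 → ¬(i' = i ∧ j' = j) →
      G'.Adj (Sum.inl i') (Sum.inr j') := by
    intro i' j' hc hne
    have hMij' : 0 < M i' j' :=
      lt_of_le_of_ne (hM.1 i' j') (Ne.symm fun h0 => hc (hC.2.2 i' j' h0))
    have hadj' : (graphOf M).Adj (Sum.inl i') (Sum.inr j') := hMij'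
    rw [hG', SimpleGraph.sdiff_adj]
    refine ⟨hadj', fun hfe => ?_⟩
    rw [SimpleGraph.fromEdgeSet_adj] at hfe
    have h1 := hfe.1
    simp only [Set.mem_singleton_iff, Sym2.eq_iff] at h1
    rcases h1 with ⟨h1, h2⟩ | ⟨h1, h2⟩
    · exact hne ⟨Sum.inl.inj h1, Sum.inr.inj h2⟩
    · exact absurd h1 (by simp)
  have key : ∀ i' j', C i' j' * (χ (Sum.inl i') - χ (Sum.inr j')) =
      if i' = i ∧ j' = j then C i j else 0 := by
    intro i' j'
    by_cases hc : C i' j' = 0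
    · rw [hc, zero_mul]
      split_ifs with h
      · obtain ⟨rfl, rfl⟩ := h
        exact hc.symm
      · rfl
    by_cases hne : i' = i ∧ j' = j
    · obtain ⟨rfl, rfl⟩ := hne
      have h1 : χ (Sum.inl i') = 1 := by
        simp only [hχ]
        exact if_pos (SimpleGraph.Reachable.refl _)
      have h2 : χ (Sum.inr j') = 0 := by simp [hχ, hnr]
      rw [h1, h2]
      simp
    · have hadj' := hedge i' j' hc hne
      have hiff : G'.Reachable (Sum.inl i) (Sum.inl i') ↔
          G'.Reachable (Sum.inl i) (Sum.inr j') :=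
        ⟨fun h => h.trans ⟨hadj'.toWalk⟩, fun h => h.trans ⟨hadj'.symm.toWalk⟩⟩
      have : χ (Sum.inl i') = χ (Sum.inr j') := by
        simp only [hχ]
        by_cases hr : G'.Reachable (Sum.inl i) (Sum.inl i')
        · rw [if_pos hr, if_pos (hiff.mp hr)]
        · rw [if_neg hr, if_neg (fun h => hr (hiff.mpr h))]
      rw [this, sub_self, mul_zero, if_neg hne]
  have hsum0 : ∑ i', ∑ j', C i' j' * (χ (Sum.inl i') - χ (Sum.inr j')) = 0 := by
    have e1 : ∑ i', ∑ j', C i' j' * χ (Sum.inl i') = 0 := by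
      have : ∀ i', ∑ j', C i' j' * χ (Sum.inl i') = (∑ j', C i' j') * χ (Sum.inl i') := by
        intro i'; rw [Finset.sum_mul]
      simp only [this, hC.1, zero_mul, Finset.sum_const_zero]
    have e2 : ∑ i', ∑ j', C i' j' * χ (Sum.inr j') = 0 := by
      rw [Finset.sum_comm]
      have : ∀ j', ∑ i', C i' j' * χ (Sum.inr j') = (∑ i', C i' j') * χ (Sum.inr j') := by
        intro j'; rw [Finset.sum_mul]
      simp only [this, hC.2.1, zero_mul, Finset.sum_const_zero]
    calc ∑ i', ∑ j', C i' j' * (χ (Sum.inl i') - χ (Sum.inr j'))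
        = (∑ i', ∑ j', C i' j' * χ (Sum.inl i')) -
            ∑ i', ∑ j', C i' j' * χ (Sum.inr j') := by
          rw [← Finset.sum_sub_distrib]
          congr 1; ext i'
          rw [← Finset.sum_sub_distrib]
          congr 1; ext j'
          ring
      _ = 0 := by rw [e1, e2, sub_zero]
  have hsum1 : ∑ i', ∑ j', C i' j' * (χ (Sum.inl i') - χ (Sum.inr j')) = C i j := by
    simp only [key]
    have : ∀ i', ∑ j', (if i' = i ∧ j' = j then C i j else 0) =
        if i' = i then C i j else 0 := by
      intro i'
      by_cases h : i' = i
      · subst h; simp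
      · simp [h]
    simp [this]
  exact hij (by rw [← hsum1, hsum0])

theorem stmt10 (n m : ℕ) (M : Matrix (Fin n) (Fin m) ℝ) (hM : DS n m M) :
    IsExtremal M ↔ (graphOf M).IsAcyclic := by
  rw [extremal_iff_pert M hM]
  constructor
  · intro hpert v c hc
    exact wmat_ne_zero M c hc (hpert _ (wmat_pert M c))
  · exact acyclic_pert M hM
end

section
/- The 3 × 4 matrix F with rows (3,0,0,1), (0,2,2,0), (0,1,1,2) is doubly stochastic with uniform marginals (column sums 3, row sums 4), has |supp F| = 7 = S(3,4) + 1, but is not an extreme point of M(3,4). -/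
open Finset

noncomputable def F : Matrix (Fin 3) (Fin 4) ℝ :=
  !![3,0,0,1; 0,2,2,0; 0,1,1,2]

noncomputable def A0 : Matrix (Fin 3) (Fin 4) ℝ :=
  !![3,1,0,0; 0,2,2,0; 0,0,1,3]

noncomputable def A1 : Matrix (Fin 3) (Fin 4) ℝ :=
  !![3,0,0,1; 0,3,1,0; 0,0,2,2]

noncomputable def B1 : Matrix (Fin 3) (Fin 4) ℝ :=
  !![3,0,0,1; 0,1,3,0; 0,2,0,2]

lemma dsA0 : DS 3 4 A0 := by
  refine ⟨?_, ?_, ?_⟩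
  · intro i j; fin_cases i <;> fin_cases j <;> norm_num [A0]
  · intro j; fin_cases j <;> norm_num [Fin.sum_univ_three, A0, Matrix.vecHead, Matrix.vecTail, Matrix.cons_val_two, Matrix.cons_val_three]
  · intro i; fin_cases i <;> norm_num [Fin.sum_univ_four, A0, Matrix.vecHead, Matrix.vecTail, Matrix.cons_val_two, Matrix.cons_val_three]

lemma dsA1 : DS 3 4 A1 := by
  refine ⟨?_, ?_, ?_⟩
  · intro i j; fin_cases i <;> fin_cases j <;> norm_num [A1]
  · intro j; fin_cases j <;> norm_num [Fin.sum_univ_three, A1, Matrix.vecHead, Matrix.vecTail, Matrix.cons_val_two, Matrix.cons_val_three]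
  · intro i; fin_cases i <;> norm_num [Fin.sum_univ_four, A1, Matrix.vecHead, Matrix.vecTail, Matrix.cons_val_two, Matrix.cons_val_three]

lemma dsB1 : DS 3 4 B1 := by
  refine ⟨?_, ?_, ?_⟩
  · intro i j; fin_cases i <;> fin_cases j <;> norm_num [B1]
  · intro j; fin_cases j <;> norm_num [Fin.sum_univ_three, B1, Matrix.vecHead, Matrix.vecTail, Matrix.cons_val_two, Matrix.cons_val_three]
  · intro i; fin_cases i <;> norm_num [Fin.sum_univ_four, B1, Matrix.vecHead, Matrix.vecTail, Matrix.cons_val_two, Matrix.cons_val_three]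

lemma lower (A : Matrix (Fin 3) (Fin 4) ℝ) (hA : DS 3 4 A) : 6 ≤ (supp A).card := by
  obtain ⟨hpos, hcol, hrow⟩ := hA
  -- each entry at most 3
  have hle : ∀ i j, A i j ≤ 3 := by
    intro i j
    have := Finset.single_le_sum (f := fun i' => A i' j) (fun i' _ => hpos i' j)
      (Finset.mem_univ i)
    simpa [hcol j] using (this.trans_eq (by norm_num [hcol j]))
  -- each row has at least 2 nonzero entries
  have hrow2 : ∀ i, 2 ≤ (Finset.univ.filter fun j => A i j ≠ 0).card := by
    intro i
    by_contra h
    push_neg at h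
    have hcard : ((Finset.univ.filter fun j => A i j ≠ 0).card : ℝ) ≤ 1 := by
      have : (Finset.univ.filter fun j => A i j ≠ 0).card ≤ 1 := by omega
      exact_mod_cast this
    have hsum : ∑ j, A i j = ∑ j ∈ Finset.univ.filter (fun j => A i j ≠ 0), A i j := by
      rw [← Finset.sum_filter_ne_zero]
    have hb : ∑ j ∈ Finset.univ.filter (fun j => A i j ≠ 0), A i j ≤
        3 * (Finset.univ.filter fun j => A i j ≠ 0).card := by
      calc ∑ j ∈ Finset.univ.filter (fun j => A i j ≠ 0), A i j
          ≤ ∑ _j ∈ Finset.univ.filter (fun j => A i j ≠ 0), (3:ℝ) :=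
            Finset.sum_le_sum (fun j _ => hle i j)
        _ = 3 * (Finset.univ.filter fun j => A i j ≠ 0).card := by
            rw [Finset.sum_const]; ring
    have : (4:ℝ) ≤ 3 := by
      have h4 : (4:ℝ) = ∑ j, A i j := by rw [hrow i]; norm_num
      nlinarith [hb, hcard, hsum]
    linarith
  -- card of supp is the sum of row counts
  have hfib : (supp A).card = ∑ i : Fin 3, ((supp A).filter fun p => p.1 = i).card :=
    Finset.card_eq_sum_card_fiberwise (fun p _ => Finset.mem_univ p.1)
  have hfibeq : ∀ i : Fin 3, ((supp A).filter fun p => p.1 = i).card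
      = (Finset.univ.filter fun j => A i j ≠ 0).card := by
    intro i
    apply Finset.card_nbij' (fun p => p.2) (fun j => (i, j))
    · intro p hp
      simp only [supp, Finset.mem_coe, Finset.mem_filter, Finset.mem_univ, true_and] at hp ⊢
      rw [← hp.2]; exact hp.1
    · intro j hj
      simp only [supp, Finset.mem_filter, Finset.mem_univ, true_and] at hj ⊢
      simpa using hj
    · intro p hp
      simp only [supp, Finset.mem_coe, Finset.mem_filter] at hp
      exact Prod.ext hp.2.symm rfl
    · intro j hj; rfl
  rw [hfib]
  calc (6:ℕ) = ∑ _i : Fin 3, 2 := by simp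
    _ ≤ ∑ i : Fin 3, ((supp A).filter fun p => p.1 = i).card := by
        apply Finset.sum_le_sum
        intro i _
        rw [hfibeq i]
        exact hrow2 i

theorem stmt15 : DS 3 4 F ∧ (supp F).card = 7 ∧ S 3 4 = 6 ∧ ¬ IsExtremal F := by
  have dsF : DS 3 4 F := by
    refine ⟨?_, ?_, ?_⟩
    · intro i j; fin_cases i <;> fin_cases j <;> norm_num [F]
    · intro j; fin_cases j <;> norm_num [Fin.sum_univ_three, F, Matrix.vecHead, Matrix.vecTail, Matrix.cons_val_two, Matrix.cons_val_three]
    · intro i; fin_cases i <;> norm_num [Fin.sum_univ_four, F, Matrix.vecHead, Matrix.vecTail, Matrix.cons_val_two, Matrix.cons_val_three]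
  refine ⟨dsF, ?_, ?_, ?_⟩
  · simp [supp, Finset.card_filter, Fintype.sum_prod_type, Fin.sum_univ_four,
      Fin.sum_univ_three, F, Matrix.vecHead, Matrix.vecTail, Matrix.cons_val_two, Matrix.cons_val_three]
  · have hmem : 6 ∈ {k | ∃ A : Matrix (Fin 3) (Fin 4) ℝ, DS 3 4 A ∧ (supp A).card = k} := by
      refine ⟨A0, dsA0, ?_⟩
      simp [supp, Finset.card_filter, Fintype.sum_prod_type, Fin.sum_univ_four,
        Fin.sum_univ_three, A0, Matrix.vecHead, Matrix.vecTail, Matrix.cons_val_two, Matrix.cons_val_three]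
    refine le_antisymm (Nat.sInf_le hmem) ?_
    obtain ⟨A, hA, hcard⟩ := Nat.sInf_mem (⟨6, hmem⟩ :
      Set.Nonempty {k | ∃ A : Matrix (Fin 3) (Fin 4) ℝ, DS 3 4 A ∧ (supp A).card = k})
    rw [S, ← hcard]
    exact lower A hA
  · rintro ⟨_, h⟩
    have hF : F = (1/2 : ℝ) • A1 + (1 - (1/2 : ℝ)) • B1 := by
      ext i j
      fin_cases i <;> fin_cases j <;>
        norm_num [F, A1, B1, Matrix.add_apply, Matrix.smul_apply]
    obtain ⟨hA1, _⟩ := h A1 B1 (1/2) dsA1 dsB1 (by norm_num) (by norm_num) hF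
    have := congrFun (congrFun hA1 1) 1
    norm_num [A1, F, Matrix.vecHead, Matrix.vecTail, Matrix.cons_val_two, Matrix.cons_val_three] at this
end

section
/- Let n divide m, say m = kn with k ≥ 1. Then every extreme point of M(n, kn) has support of cardinality exactly kn, i.e. extremal matrices in M(n, kn) coincide with the matrices of minimum support, and S(n, kn) = kn. -/
open Finset

lemma mem_supp {n m : ℕ} {A : Matrix (Fin n) (Fin m) ℝ} {p : Fin n × Fin m} :
    p ∈ supp A ↔ A p.1 p.2 ≠ 0 := by simp [supp]

/-- card of supp counted by columns -/
lemma card_supp_cols {n m : ℕ} (A : Matrix (Fin n) (Fin m) ℝ) :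
    (supp A).card = ∑ j, (Finset.univ.filter fun i => A i j ≠ 0).card := by
  rw [Finset.card_eq_sum_card_fiberwise (f := Prod.snd) (t := Finset.univ) (fun x _ => mem_univ _)]
  refine Finset.sum_congr rfl fun j _ => ?_
  refine Finset.card_bij' (fun p _ => p.1) (fun i _ => (i, j)) ?_ ?_ ?_ ?_
  · rintro ⟨a, b⟩ ha
    simp only [Finset.mem_filter, mem_supp, mem_univ, true_and] at ha ⊢
    obtain ⟨h1, rfl⟩ := ha
    exact h1
  · rintro i hi
    simp only [Finset.mem_filter, mem_supp, mem_univ, true_and] at hi ⊢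
    exact ⟨hi, trivial⟩
  · rintro ⟨a, b⟩ ha
    simp only [Finset.mem_filter] at ha
    exact Prod.ext rfl ha.2.symm
  · rintro i _
    rfl

/-- card of supp counted by rows -/
lemma card_supp_rows {n m : ℕ} (A : Matrix (Fin n) (Fin m) ℝ) :
    (supp A).card = ∑ i, (Finset.univ.filter fun j => A i j ≠ 0).card := by
  rw [Finset.card_eq_sum_card_fiberwise (f := Prod.fst) (t := Finset.univ) (fun x _ => mem_univ _)]
  refine Finset.sum_congr rfl fun i _ => ?_
  refine Finset.card_bij' (fun p _ => p.2) (fun j _ => (i, j)) ?_ ?_ ?_ ?_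
  · rintro ⟨a, b⟩ ha
    simp only [Finset.mem_filter, mem_supp, mem_univ, true_and] at ha ⊢
    obtain ⟨h1, rfl⟩ := ha
    exact h1
  · rintro j hj
    simp only [Finset.mem_filter, mem_supp, mem_univ, true_and] at hj ⊢
    exact ⟨hj, trivial⟩
  · rintro ⟨a, b⟩ ha
    simp only [Finset.mem_filter] at ha
    exact Prod.ext ha.2.symm rfl
  · rintro j _
    rfl

/-- every entry is at most n -/
lemma entry_le {n m : ℕ} {A : Matrix (Fin n) (Fin m) ℝ} (hA : DS n m A) (i : Fin n)
    (j : Fin m) : A i j ≤ (n : ℝ) := by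
  rw [← hA.2.1 j]
  exact Finset.single_le_sum (fun i _ => hA.1 i j) (mem_univ i)

/-- every column has a nonzero entry -/
lemma col_nonzero {n m : ℕ} (hn : 0 < n) {A : Matrix (Fin n) (Fin m) ℝ} (hA : DS n m A)
    (j : Fin m) : ∃ i, A i j ≠ 0 := by
  by_contra h
  push_neg at h
  have := hA.2.1 j
  simp only [h, Finset.sum_const_zero] at this
  exact absurd this.symm (by positivity)

/-- lower bound on the support of any doubly stochastic-like matrix -/
lemma card_supp_ge {n m : ℕ} (hn : 0 < n) {A : Matrix (Fin n) (Fin m) ℝ} (hA : DS n m A) :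
    m ≤ (supp A).card := by
  rw [card_supp_cols]
  calc m = ∑ _j : Fin m, 1 := by simp
  _ ≤ ∑ j, (Finset.univ.filter fun i => A i j ≠ 0).card := by
    refine Finset.sum_le_sum fun j _ => ?_
    obtain ⟨i, hi⟩ := col_nonzero hn hA j
    exact Finset.card_pos.2 ⟨i, by simp [hi]⟩

/-- the row degree is at least k -/
lemma rowdeg_ge {n k : ℕ} (hn : 0 < n) {M : Matrix (Fin n) (Fin (k * n)) ℝ}
    (hM : DS n (k * n) M) (i : Fin n) :
    k ≤ (Finset.univ.filter fun j => M i j ≠ 0).card := by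
  set s := Finset.univ.filter fun j => M i j ≠ 0 with hs
  have h1 : (k : ℝ) * n = ∑ j ∈ s, M i j := by
    have := hM.2.2 i
    push_cast at this
    rw [hs, Finset.sum_filter_ne_zero, this]
  have h2 : ∑ j ∈ s, M i j ≤ (s.card : ℝ) * n := by
    calc ∑ j ∈ s, M i j ≤ ∑ _j ∈ s, (n : ℝ) := Finset.sum_le_sum fun j _ => entry_le hM i j
    _ = s.card * n := by simp [mul_comm]
  have : (k : ℝ) * n ≤ (s.card : ℝ) * n := h1 ▸ h2
  have := le_of_mul_le_mul_right this (by exact_mod_cast hn)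
  exact_mod_cast this

/-- if the row degree is at most k, then every nonzero entry in the row equals n -/
lemma rowdeg_eq_entries {n k : ℕ} (hn : 0 < n) {M : Matrix (Fin n) (Fin (k * n)) ℝ}
    (hM : DS n (k * n) M) (i : Fin n)
    (hdeg : (Finset.univ.filter fun j => M i j ≠ 0).card ≤ k)
    (j : Fin (k * n)) (hj : M i j ≠ 0) : M i j = (n : ℝ) := by
  set s := Finset.univ.filter fun j => M i j ≠ 0 with hs
  have h1 : ∑ j ∈ s, M i j = (k : ℝ) * n := by
    have := hM.2.2 i
    push_cast at this
    rw [hs, Finset.sum_filter_ne_zero, this]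
  by_contra hne
  have hlt : M i j < (n : ℝ) := lt_of_le_of_ne (entry_le hM i j) hne
  have hjs : j ∈ s := by simp [hs, hj]
  have : ∑ j ∈ s, M i j < ∑ _j ∈ s, (n : ℝ) :=
    Finset.sum_lt_sum (fun j _ => entry_le hM i j) ⟨j, hjs, hlt⟩
  rw [h1, Finset.sum_const, nsmul_eq_mul] at this
  have : (k : ℝ) * n < (k : ℝ) * n := lt_of_lt_of_le this (by
    have : (s.card : ℝ) ≤ k := by exact_mod_cast hdeg
    nlinarith [hn, (by exact_mod_cast hn : (0:ℝ) < n)])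
  exact lt_irrefl _ this

/-- if an entry equals the whole column sum, the rest of the column vanishes -/
lemma col_rest_zero {n m : ℕ} {A : Matrix (Fin n) (Fin m) ℝ} (hA : DS n m A) {i : Fin n}
    {j : Fin m} (hij : A i j = (n : ℝ)) {i' : Fin n} (hi' : i' ≠ i) : A i' j = 0 := by
  have hsum : ∑ x ∈ Finset.univ.erase i, A x j = 0 := by
    have h := hA.2.1 j
    rw [← Finset.add_sum_erase _ _ (mem_univ i), hij] at h
    linarith
  have := (Finset.sum_eq_zero_iff_of_nonneg (fun x _ => hA.1 x j)).1 hsum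
  exact this i' (by simp [hi'])

/-- dimension count: a nonzero perturbation with vanishing margins exists -/
lemma exists_perturb {n m : ℕ} (E : Finset (Fin n × Fin m)) (R : Finset (Fin n))
    (C : Finset (Fin m)) (hE : ∀ p ∈ E, p.1 ∈ R ∧ p.2 ∈ C) (hC : C.Nonempty)
    (hcard : R.card + C.card ≤ E.card) :
    ∃ D : Matrix (Fin n) (Fin m) ℝ, D ≠ 0 ∧ (∀ p : Fin n × Fin m, p ∉ E → D p.1 p.2 = 0) ∧
      (∀ i, ∑ j, D i j = 0) ∧ (∀ j, ∑ i, D i j = 0) := by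
  classical
  obtain ⟨j0, hj0⟩ := hC
  set C' : Finset (Fin m) := C.erase j0 with hC'
  set Φ₁ : (↥E → ℝ) →ₗ[ℝ] (↥R → ℝ) :=
    LinearMap.pi fun i => ∑ p ∈ Finset.univ.filter (fun p : ↥E => p.1.1 = i.1),
      LinearMap.proj p with hΦ₁
  set Φ₂ : (↥E → ℝ) →ₗ[ℝ] (↥C' → ℝ) :=
    LinearMap.pi fun j => ∑ p ∈ Finset.univ.filter (fun p : ↥E => p.1.2 = j.1),
      LinearMap.proj p with hΦ₂
  set Φ := Φ₁.prod Φ₂ with hΦ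
  have hrank : Module.finrank ℝ ((↥R → ℝ) × (↥C' → ℝ)) < Module.finrank ℝ (↥E → ℝ) := by
    rw [Module.finrank_prod, Module.finrank_pi, Module.finrank_pi, Module.finrank_pi,
      Fintype.card_coe, Fintype.card_coe, Fintype.card_coe]
    have h1 : C'.card = C.card - 1 := Finset.card_erase_of_mem hj0
    have h2 : 1 ≤ C.card := Finset.card_pos.2 ⟨j0, hj0⟩
    omega
  have hninj : ¬ Function.Injective Φ := by
    intro h
    exact absurd (LinearMap.finrank_le_finrank_of_injective h) (not_le.2 hrank)
  rw [Function.not_injective_iff] at hninj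
  obtain ⟨g₁, g₂, hΦeq, hne⟩ := hninj
  set g : ↥E → ℝ := g₁ - g₂ with hg
  have hgz : Φ g = 0 := by rw [hg, map_sub, hΦeq, sub_self]
  have hgne : g ≠ 0 := sub_ne_zero.2 hne
  set D : Matrix (Fin n) (Fin m) ℝ :=
    fun i j => if h : (i, j) ∈ E then g ⟨(i, j), h⟩ else 0 with hD
  have hDval : ∀ p : ↥E, D p.1.1 p.1.2 = g p := by
    intro p
    rw [hD]
    simp only [Prod.mk.eta]
    rw [dif_pos p.2]
  have hDzero : ∀ p : Fin n × Fin m, p ∉ E → D p.1 p.2 = 0 := by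
    intro p hp
    rw [hD]
    simp only [Prod.mk.eta]
    rw [dif_neg hp]
  -- row sums
  have hrow : ∀ i : Fin n, ∑ j, D i j = ∑ p ∈ E.attach, if p.1.1 = i then g p else 0 := by
    intro i
    have step1 : (∑ q : Fin n × Fin m, if q.1 = i then D q.1 q.2 else 0) = ∑ j, D i j := by
      rw [Fintype.sum_prod_type]
      rw [Finset.sum_eq_single i (fun a _ ha => by simp [ha]) (by simp)]
      simp
    have step2 : (∑ q : Fin n × Fin m, if q.1 = i then D q.1 q.2 else 0)
        = ∑ q ∈ E, (if q.1 = i then D q.1 q.2 else 0) := by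
      refine (Finset.sum_subset (Finset.subset_univ E) fun q _ hq => ?_).symm
      rw [hDzero q hq]
      simp
    rw [← step1, step2, ← Finset.sum_attach E (fun q => if q.1 = i then D q.1 q.2 else 0)]
    refine Finset.sum_congr rfl fun p _ => ?_
    rw [hDval p]
  have hcol : ∀ jj : Fin m, ∑ i, D i jj = ∑ p ∈ E.attach, if p.1.2 = jj then g p else 0 := by
    intro jj
    have step1 : (∑ q : Fin n × Fin m, if q.2 = jj then D q.1 q.2 else 0) = ∑ i, D i jj := by
      rw [Fintype.sum_prod_type]
      refine Finset.sum_congr rfl fun a _ => ?_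
      rw [Finset.sum_eq_single jj (fun b _ hb => by simp [hb]) (by simp)]
      simp
    have step2 : (∑ q : Fin n × Fin m, if q.2 = jj then D q.1 q.2 else 0)
        = ∑ q ∈ E, (if q.2 = jj then D q.1 q.2 else 0) := by
      refine (Finset.sum_subset (Finset.subset_univ E) fun q _ hq => ?_).symm
      rw [hDzero q hq]
      simp
    rw [← step1, step2, ← Finset.sum_attach E (fun q => if q.2 = jj then D q.1 q.2 else 0)]
    refine Finset.sum_congr rfl fun p _ => ?_
    rw [hDval p]
  have hrows : ∀ i, ∑ j, D i j = 0 := by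
    intro i
    rw [hrow i]
    by_cases hiR : i ∈ R
    · have h1 : Φ₁ g = 0 := congrArg Prod.fst hgz
      have h2 := congrFun h1 ⟨i, hiR⟩
      simp only [hΦ₁, LinearMap.pi_apply, LinearMap.coe_sum, Finset.sum_apply,
        LinearMap.proj_apply, Pi.zero_apply] at h2
      rw [← Finset.sum_filter, ← h2, Finset.univ_eq_attach]
    · refine Finset.sum_eq_zero fun p _ => ?_
      rw [if_neg]
      intro h
      exact hiR (h ▸ (hE p.1 p.2).1)
  have hcolzero : ∀ jj, jj ≠ j0 → ∑ i, D i jj = 0 := by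
    intro jj hjj
    rw [hcol jj]
    by_cases hjC : jj ∈ C'
    · have h1 : Φ₂ g = 0 := congrArg Prod.snd hgz
      have h2 := congrFun h1 ⟨jj, hjC⟩
      simp only [hΦ₂, LinearMap.pi_apply, LinearMap.coe_sum, Finset.sum_apply,
        LinearMap.proj_apply, Pi.zero_apply] at h2
      rw [← Finset.sum_filter, ← h2, Finset.univ_eq_attach]
    · refine Finset.sum_eq_zero fun p _ => ?_
      rw [if_neg]
      intro h
      have : p.1.2 ∈ C := (hE p.1 p.2).2
      rw [h] at this
      exact hjC (Finset.mem_erase.2 ⟨hjj, this⟩)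
  have hcols : ∀ j, ∑ i, D i j = 0 := by
    have htotal : ∑ jj, ∑ i, D i jj = 0 := by
      rw [Finset.sum_comm]
      exact Finset.sum_eq_zero fun i _ => hrows i
    have hsingle : ∑ jj, ∑ i, D i jj = ∑ i, D i j0 :=
      Finset.sum_eq_single j0 (fun b _ hb => hcolzero b hb) (by simp)
    intro j
    by_cases hj : j = j0
    · rw [hj, ← hsingle, htotal]
    · exact hcolzero j hj
  refine ⟨D, ?_, hDzero, hrows, hcols⟩
  intro hD0
  apply hgne
  funext p
  have := hDval p
  rw [hD0] at this
  simpa using this.symm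

/-- an extremal matrix admits no nonzero perturbation with vanishing margins -/
lemma extremal_perturb {n m : ℕ} {M : Matrix (Fin n) (Fin m) ℝ} (hM : IsExtremal M)
    (D : Matrix (Fin n) (Fin m) ℝ) (hsupp : ∀ i j, M i j = 0 → D i j = 0)
    (hr : ∀ i, ∑ j, D i j = 0) (hc : ∀ j, ∑ i, D i j = 0) : D = 0 := by
  by_contra hD0
  have hne : (supp D).Nonempty := by
    rw [Finset.nonempty_iff_ne_empty]
    intro h
    apply hD0
    ext i j
    have : (i, j) ∉ supp D := by rw [h]; exact Finset.notMem_empty _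
    simpa [mem_supp] using this
  set ε : ℝ := (supp D).inf' hne fun p => M p.1 p.2 / |D p.1 p.2| with hε
  have hεpos : 0 < ε := by
    rw [hε, Finset.lt_inf'_iff]
    intro p hp
    rw [mem_supp] at hp
    have hMpos : 0 < M p.1 p.2 :=
      lt_of_le_of_ne (hM.1.1 _ _) (fun h => hp (hsupp _ _ h.symm))
    exact div_pos hMpos (abs_pos.2 hp)
  have hbound : ∀ i j, |ε * D i j| ≤ M i j := by
    intro i j
    by_cases h : D i j = 0
    · simpa [h] using hM.1.1 i j
    · have hp : (i, j) ∈ supp D := by simp [mem_supp, h]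
      have h1 : ε ≤ M i j / |D i j| := Finset.inf'_le _ hp
      rw [abs_mul, abs_of_pos hεpos]
      calc ε * |D i j| ≤ (M i j / |D i j|) * |D i j| :=
            mul_le_mul_of_nonneg_right h1 (abs_nonneg _)
      _ = M i j := div_mul_cancel₀ _ (abs_ne_zero.2 h)
  set A := M + ε • D with hA
  set B := M - ε • D with hB
  have habs : ∀ i j, -(M i j) ≤ ε * D i j ∧ ε * D i j ≤ M i j := fun i j => abs_le.1 (hbound i j)
  have hDSA : DS n m A := by
    refine ⟨fun i j => ?_, fun j => ?_, fun i => ?_⟩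
    · have := (habs i j).1
      simp only [hA, Matrix.add_apply, Matrix.smul_apply, smul_eq_mul]
      linarith
    · simp only [hA, Matrix.add_apply, Matrix.smul_apply, smul_eq_mul,
        Finset.sum_add_distrib, ← Finset.mul_sum, hc j, hM.1.2.1 j, mul_zero, add_zero]
    · simp only [hA, Matrix.add_apply, Matrix.smul_apply, smul_eq_mul,
        Finset.sum_add_distrib, ← Finset.mul_sum, hr i, hM.1.2.2 i, mul_zero, add_zero]
  have hDSB : DS n m B := by
    refine ⟨fun i j => ?_, fun j => ?_, fun i => ?_⟩
    · have := (habs i j).2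
      simp only [hB, Matrix.sub_apply, Matrix.smul_apply, smul_eq_mul]
      linarith
    · simp only [hB, Matrix.sub_apply, Matrix.smul_apply, smul_eq_mul,
        Finset.sum_sub_distrib, ← Finset.mul_sum, hc j, hM.1.2.1 j, mul_zero, sub_zero]
    · simp only [hB, Matrix.sub_apply, Matrix.smul_apply, smul_eq_mul,
        Finset.sum_sub_distrib, ← Finset.mul_sum, hr i, hM.1.2.2 i, mul_zero, sub_zero]
  have heq : M = ((1:ℝ)/2) • A + (1 - (1:ℝ)/2) • B := by
    ext i j
    simp only [hA, hB, Matrix.add_apply, Matrix.sub_apply, Matrix.smul_apply, smul_eq_mul]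
    ring
  obtain ⟨hAe, _⟩ := hM.2 A B ((1:ℝ)/2) hDSA hDSB (by norm_num) (by norm_num) heq
  apply hD0
  have hzero : ε • D = 0 := by
    have : M + ε • D = M := hAe
    calc ε • D = (M + ε • D) - M := by abel
    _ = 0 := by rw [this]; abel
  have := smul_eq_zero.1 hzero
  rcases this with h | h
  · exact absurd h (ne_of_gt hεpos)
  · exact h

theorem stmt19 (n k : ℕ) (hn : 0 < n) (hk : 1 ≤ k) :
    (∀ M : Matrix (Fin n) (Fin (k * n)) ℝ, DS n (k * n) M →
      (IsExtremal M ↔ (supp M).card = k * n)) ∧ S n (k * n) = k * n := by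
  have main : ∀ M : Matrix (Fin n) (Fin (k * n)) ℝ, DS n (k * n) M →
      (IsExtremal M ↔ (supp M).card = k * n) := by
    intro M hDS
    constructor
    · -- forward: extremal implies support of size k*n
      intro hext
      set R' : Finset (Fin n) :=
        univ.filter (fun i => k < (univ.filter fun j => M i j ≠ 0).card) with hR'
      by_cases hR'e : R' = ∅
      · rw [card_supp_rows]
        have hall : ∀ i, (univ.filter fun j => M i j ≠ 0).card = k := by
          intro i
          have h1 := rowdeg_ge hn hDS i
          have h2 : i ∉ R' := by rw [hR'e]; exact Finset.notMem_empty _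
          rw [hR', Finset.mem_filter] at h2
          push_neg at h2
          have := h2 (mem_univ i)
          omega
        rw [Finset.sum_congr rfl fun i _ => hall i, Finset.sum_const, smul_eq_mul,
          Finset.card_univ, Fintype.card_fin, Nat.mul_comm]
      · exfalso
        have hR'ne : R'.Nonempty := Finset.nonempty_iff_ne_empty.2 hR'e
        set C'' : Finset (Fin (k * n)) :=
          univ.filter (fun j => ∃ i ∈ R', M i j ≠ 0) with hC''
        have ha : ∀ j ∈ C'', ∀ i, i ∉ R' → M i j = 0 := by
          intro j hj i hiR
          by_contra hMij
          rw [hR', Finset.mem_filter] at hiR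
          push_neg at hiR
          have hdeg : (univ.filter fun j => M i j ≠ 0).card ≤ k := hiR (mem_univ i)
          have hval : M i j = n := rowdeg_eq_entries hn hDS i hdeg j hMij
          rw [hC'', Finset.mem_filter] at hj
          obtain ⟨i0, hi0R, hi0⟩ := hj.2
          have hne : i0 ≠ i := by
            intro h
            rw [h, hR', Finset.mem_filter] at hi0R
            exact absurd hi0R.2 (not_lt.2 hdeg)
          exact hi0 (col_rest_zero hDS hval hne)
        set E : Finset (Fin n × Fin (k * n)) := (supp M).filter (fun p => p.1 ∈ R') with hE
        have hEsub : ∀ p ∈ E, p.1 ∈ R' ∧ p.2 ∈ C'' := by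
          intro p hp
          rw [hE, Finset.mem_filter, mem_supp] at hp
          refine ⟨hp.2, ?_⟩
          rw [hC'', Finset.mem_filter]
          exact ⟨mem_univ _, p.1, hp.2, hp.1⟩
        have hEcard : E.card = ∑ i ∈ R', (univ.filter fun j => M i j ≠ 0).card := by
          rw [Finset.card_eq_sum_card_fiberwise (f := Prod.fst) (t := R')
            (fun p hp => (hEsub p hp).1)]
          refine Finset.sum_congr rfl fun i hi => ?_
          refine Finset.card_bij' (fun p _ => p.2) (fun j _ => (i, j)) ?_ ?_ ?_ ?_
          · rintro ⟨a, b⟩ hp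
            simp only [hE, Finset.mem_filter, mem_supp, mem_univ, true_and] at hp ⊢
            obtain ⟨⟨h1, _⟩, rfl⟩ := hp
            exact h1
          · rintro j hj
            simp only [hE, Finset.mem_filter, mem_supp, mem_univ, true_and] at hj ⊢
            exact ⟨⟨hj, hi⟩, trivial⟩
          · rintro ⟨a, b⟩ hp
            simp only [hE, Finset.mem_filter] at hp
            exact Prod.ext hp.2.symm rfl
          · rintro j _
            rfl
        have hEge : (k + 1) * R'.card ≤ E.card := by
          rw [hEcard]
          calc (k + 1) * R'.card = ∑ _i ∈ R', (k + 1) := by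
                rw [Finset.sum_const, smul_eq_mul, Nat.mul_comm]
          _ ≤ ∑ i ∈ R', (univ.filter fun j => M i j ≠ 0).card := by
                refine Finset.sum_le_sum fun i hi => ?_
                rw [hR', Finset.mem_filter] at hi
                omega
        have hCcard : C''.card = k * R'.card := by
          have key : (n : ℝ) * C''.card = (R'.card : ℝ) * (k * n) := by
            have lhs : ∑ j ∈ C'', ∑ i, M i j = (C''.card : ℝ) * n := by
              rw [Finset.sum_congr rfl (fun j _ => hDS.2.1 j), Finset.sum_const, nsmul_eq_mul]
            have swap : ∑ j ∈ C'', ∑ i, M i j = ∑ i ∈ R', ∑ j, M i j := by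
              calc ∑ j ∈ C'', ∑ i, M i j = ∑ j ∈ C'', ∑ i ∈ R', M i j := by
                    refine Finset.sum_congr rfl fun j hj => ?_
                    exact (Finset.sum_subset (Finset.subset_univ R')
                      fun i _ hi => ha j hj i hi).symm
              _ = ∑ i ∈ R', ∑ j ∈ C'', M i j := Finset.sum_comm
              _ = ∑ i ∈ R', ∑ j, M i j := by
                    refine Finset.sum_congr rfl fun i hi => ?_
                    refine Finset.sum_subset (Finset.subset_univ C'') fun j _ hj => ?_
                    by_contra hMij
                    refine hj ?_
                    rw [hC'', Finset.mem_filter]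
                    exact ⟨mem_univ _, i, hi, hMij⟩
            have rhs : ∑ i ∈ R', ∑ j, M i j = (R'.card : ℝ) * (k * n) := by
              rw [Finset.sum_congr rfl fun i _ => hDS.2.2 i, Finset.sum_const, nsmul_eq_mul]
              push_cast
              ring
            rw [mul_comm, ← lhs, swap, rhs]
          have key2 : (n : ℝ) * C''.card = (n : ℝ) * (k * R'.card) := by
            rw [key]; push_cast; ring
          have hncast : (n : ℝ) ≠ 0 := by positivity
          have := mul_left_cancel₀ hncast key2
          exact_mod_cast this
        have hCne : C''.Nonempty := by
          rw [← Finset.card_pos, hCcard]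
          have := Finset.card_pos.2 hR'ne
          positivity
        have hcd : R'.card + C''.card ≤ E.card := by
          rw [hCcard]
          calc R'.card + k * R'.card = (k + 1) * R'.card := by ring
          _ ≤ E.card := hEge
        obtain ⟨D, hD0, hDsupp, hDr, hDc⟩ := exists_perturb E R' C'' hEsub hCne hcd
        apply hD0
        refine extremal_perturb hext D (fun i j h => ?_) hDr hDc
        refine hDsupp (i, j) ?_
        rw [hE, Finset.mem_filter, mem_supp]
        push_neg
        intro hh
        exact absurd h hh
    · -- reverse: minimal support implies extremal
      intro hcard
      have hge : ∀ j, 1 ≤ (univ.filter fun i => M i j ≠ 0).card := fun j => by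
        obtain ⟨i, hi⟩ := col_nonzero hn hDS j
        exact Finset.card_pos.2 ⟨i, by simp [hi]⟩
      have hcol1 : ∀ j, (univ.filter fun i => M i j ≠ 0).card = 1 := by
        by_contra hcon
        push_neg at hcon
        obtain ⟨j1, hj1⟩ := hcon
        have h2 : 2 ≤ (univ.filter fun i => M i j1 ≠ 0).card := by
          have := hge j1
          omega
        have hbig : k * n + 1 ≤ (supp M).card := by
          rw [card_supp_cols]
          rw [← Finset.add_sum_erase _ _ (mem_univ j1)]
          have hrest : ((univ : Finset (Fin (k * n))).erase j1).card ≤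
              ∑ j ∈ univ.erase j1, (univ.filter fun i => M i j ≠ 0).card := by
            calc ((univ : Finset (Fin (k * n))).erase j1).card
                = ∑ _j ∈ univ.erase j1, 1 := by rw [Finset.sum_const, smul_eq_mul, Nat.mul_one]
            _ ≤ _ := Finset.sum_le_sum fun j _ => hge j
          have hc1 : ((univ : Finset (Fin (k * n))).erase j1).card = k * n - 1 := by
            rw [Finset.card_erase_of_mem (mem_univ j1), Finset.card_univ, Fintype.card_fin]
          have hkn : 1 ≤ k * n := Nat.one_le_iff_ne_zero.2 (Nat.mul_ne_zero (by omega) (by omega))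
          omega
        omega
      refine ⟨hDS, ?_⟩
      intro A B t hA hB ht ht1 heq
      have hzero : ∀ i j, M i j = 0 → A i j = 0 ∧ B i j = 0 := by
        intro i j h
        have hthis := congrFun (congrFun heq i) j
        simp only [Matrix.add_apply, Matrix.smul_apply, smul_eq_mul] at hthis
        have s1 : 0 ≤ t * A i j := mul_nonneg ht.le (hA.1 i j)
        have s2 : 0 ≤ (1 - t) * B i j := mul_nonneg (by linarith) (hB.1 i j)
        have e1 : t * A i j = 0 := by linarith
        have e2 : (1 - t) * B i j = 0 := by linarith
        constructor
        · rcases mul_eq_zero.1 e1 with h' | h'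
          · exact absurd h' (ne_of_gt ht)
          · exact h'
        · rcases mul_eq_zero.1 e2 with h' | h'
          · exact absurd h' (by intro hh; linarith)
          · exact h'
      have huniq : ∀ j, ∃ i0, ∀ i, i ≠ i0 → M i j = 0 := by
        intro j
        have h1 := hcol1 j
        rw [Finset.card_eq_one] at h1
        obtain ⟨i0, hi0⟩ := h1
        refine ⟨i0, fun i hi => ?_⟩
        by_contra h
        have : i ∈ ({i0} : Finset (Fin n)) := hi0 ▸ (by simp [h])
        rw [Finset.mem_singleton] at this
        exact hi this
      have colval : ∀ (X : Matrix (Fin n) (Fin (k * n)) ℝ), DS n (k * n) X →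
          ∀ (j : Fin (k * n)) (i0 : Fin n), (∀ i, i ≠ i0 → X i j = 0) → X i0 j = n := by
        intro X hX j i0 hz
        have h := hX.2.1 j
        rw [Finset.sum_eq_single i0 (fun b _ hb => hz b hb) (by simp)] at h
        exact h
      have hmat : ∀ (X : Matrix (Fin n) (Fin (k * n)) ℝ), DS n (k * n) X →
          (∀ i j, M i j = 0 → X i j = 0) → X = M := by
        intro X hX hXz
        ext i j
        obtain ⟨i0, hi0z⟩ := huniq j
        by_cases hi : i = i0
        · subst hi
          rw [colval X hX j i (fun i' hi' => hXz i' j (hi0z i' hi')),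
            colval M hDS j i hi0z]
        · rw [hXz i j (hi0z i hi), hi0z i hi]
      exact ⟨hmat A hA (fun i j h => (hzero i j h).1), hmat B hB (fun i j h => (hzero i j h).2)⟩
  refine ⟨main, ?_⟩
  -- the example matrix with support exactly k*n
  set e : Fin k × Fin n ≃ Fin (k * n) := finProdFinEquiv with he
  set A : Matrix (Fin n) (Fin (k * n)) ℝ :=
    fun i j => if (e.symm j).2 = i then (n : ℝ) else 0 with hAdef
  have hncast : (n : ℝ) ≠ 0 := by positivity
  have hDSA : DS n (k * n) A := by
    refine ⟨fun i j => ?_, fun j => ?_, fun i => ?_⟩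
    · rw [hAdef]
      dsimp only
      split <;> positivity
    · rw [hAdef]
      dsimp only
      rw [Finset.sum_ite_eq]
      simp
    · rw [hAdef]
      dsimp only
      rw [← Equiv.sum_comp e (fun j => if (e.symm j).2 = i then (n : ℝ) else 0)]
      simp only [Equiv.symm_apply_apply]
      rw [Fintype.sum_prod_type]
      have hinner : ∀ a : Fin k, ∑ b : Fin n, (if ((a, b) : Fin k × Fin n).2 = i
          then (n : ℝ) else 0) = n := by
        intro a
        rw [Finset.sum_ite_eq']
        simp
      rw [Finset.sum_congr rfl fun a _ => hinner a, Finset.sum_const, nsmul_eq_mul,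
        Finset.card_univ, Fintype.card_fin]
      push_cast
      ring
  have hcardA : (supp A).card = k * n := by
    rw [card_supp_cols]
    have hone : ∀ j, (univ.filter fun i => A i j ≠ 0).card = 1 := by
      intro j
      have hset : (univ.filter fun i => A i j ≠ 0) = {(e.symm j).2} := by
        ext i
        rw [Finset.mem_filter, Finset.mem_singleton, hAdef]
        dsimp only
        constructor
        · rintro ⟨_, hne⟩
          by_contra hcon
          exact hne (if_neg fun hq => hcon hq.symm)
        · intro hh
          refine ⟨mem_univ _, ?_⟩
          rw [if_pos hh.symm]
          exact hncast
      rw [hset, Finset.card_singleton]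
    rw [Finset.sum_congr rfl fun j _ => hone j, Finset.sum_const, smul_eq_mul,
      Finset.card_univ, Fintype.card_fin, Nat.mul_one]
  have hSle : S n (k * n) ≤ k * n := Nat.sInf_le ⟨A, hDSA, hcardA⟩
  have hSge : k * n ≤ S n (k * n) := by
    refine le_csInf ⟨k * n, A, hDSA, hcardA⟩ fun b hb => ?_
    obtain ⟨X, hX, hXc⟩ := hb
    exact hXc ▸ card_supp_ge hn hX
  exact le_antisymm hSle hSge
end
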